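/- arXiv:1311.7168 — 5 statements merged into one kernel-verified Lean document; each statement's English description precedes it below -/
import Mathlib

section
/- For every ρ ∈ ℝ^m and every x ∈ ∂Δ, the function s ↦ B(s,ρ,x) is strictly increasing on [0,1], B(0,ρ,x) = 0, and the partial derivative B_s satisfies B_s(0,ρ,x) = 0 while B_s(s,ρ,x) > 0 for all s ∈ (0,1). -/
open MeasureTheory Real Filter Set

noncomputable section

/-- The unit simplex Δ in ℝ^m. -/
def simplex (m : ℕ) : Set (Fin m → ℝ) :=
  {l | (∀ i, 0 ≤ l i) ∧ ∑ i, l i ≤ 1}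

/-- ⟨λ̂, log λ̂⟩ = Σ_{i=0}^m λ_i log λ_i, with λ_0 = 1 - Σ λ_i.
Note `Real.log 0 = 0`, so the convention 0·log 0 = 0 holds. -/
def ent (m : ℕ) (l : Fin m → ℝ) : ℝ :=
  (1 - ∑ i, l i) * Real.log (1 - ∑ i, l i) + ∑ i, l i * Real.log (l i)

/-- b(λ,ρ) = log(1+|e^ρ|) + Σ_{i=0}^m (λ_i log λ_i − ρ_i λ_i), where ρ_0 = 0. -/
def bfun (m : ℕ) (l ρ : Fin m → ℝ) : ℝ :=
  Real.log (1 + ∑ i, Real.exp (ρ i)) + ent m l - ∑ i, ρ i * l i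

/-- μ(ρ) : μ_i(ρ) = e^{ρ_i}/(1+|e^ρ|) for i = 1,…,m. -/
def mu (m : ℕ) (ρ : Fin m → ℝ) : Fin m → ℝ :=
  fun i => Real.exp (ρ i) / (1 + ∑ j, Real.exp (ρ j))

/-- B(s,ρ,x) = b((1−s)μ(ρ) + s x, ρ). -/
def Bfun (m : ℕ) (s : ℝ) (ρ x : Fin m → ℝ) : ℝ :=
  bfun m (fun i => (1 - s) * mu m ρ i + s * x i) ρ

/-- D(t,ρ) = m!·vol({λ ∈ Δ : b(λ,ρ) ≤ t}). -/
def Dfun (m : ℕ) (t : ℝ) (ρ : Fin m → ℝ) : ℝ :=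
  (m.factorial : ℝ) * (volume {l ∈ simplex m | bfun m l ρ ≤ t}).toReal

/-- F_n(ρ) = ∫_{Δ^n} max_j [⟨ρ,λ^j⟩ − ⟨λ̂^j, log λ̂^j⟩] dλ^1⋯dλ^n, each dλ^j = m!·Lebesgue. -/
def Fn (m n : ℕ) (ρ : Fin m → ℝ) : ℝ :=
  ((m.factorial : ℝ)) ^ n *
    ∫ L in {L : Fin n → Fin m → ℝ | ∀ j, L j ∈ simplex m},
      ⨆ j, (∑ i, ρ i * L j i - ent m (L j))

/-- Partial derivative in the variable ρ_p. -/
def pderivR (m : ℕ) (p : Fin m) (f : (Fin m → ℝ) → ℝ) (ρ : Fin m → ℝ) : ℝ :=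
  deriv (fun r => f (Function.update ρ p r)) (ρ p)

/-- H = {(t,ρ,x) ∈ (0,∞) × ℝ^m × ∂Δ : t < b(x,ρ)}. -/
def Hset (m : ℕ) : Set (ℝ × (Fin m → ℝ) × (Fin m → ℝ)) :=
  {q | q.2.2 ∈ frontier (simplex m) ∧ 0 < q.1 ∧ q.1 < bfun m q.2.2 q.2.1}

lemma key_pos (a c s : ℝ) (ha : 0 < a) (hs : 0 < s) (hpos : 0 < a + s * c) :
    0 ≤ c * (Real.log (a + s * c) - Real.log a) ∧
      (c ≠ 0 → 0 < c * (Real.log (a + s * c) - Real.log a)) := by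
  rcases lt_trichotomy c 0 with hc | hc | hc
  · have h1 : a + s * c < a := by nlinarith
    have h2 : Real.log (a + s * c) < Real.log a := Real.log_lt_log hpos h1
    exact ⟨by nlinarith, fun _ => by nlinarith⟩
  · simp [hc]
  · have h1 : a < a + s * c := by nlinarith
    have h2 : Real.log a < Real.log (a + s * c) := Real.log_lt_log ha h1
    exact ⟨by nlinarith, fun _ => by nlinarith⟩

set_option maxHeartbeats 1000000 in
/-- s ↦ B(s,ρ,x) is strictly increasing on [0,1], B(0,ρ,x) = 0,
B_s(0,ρ,x) = 0, and B_s(s,ρ,x) > 0 for s ∈ (0,1). -/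
theorem B_strictMono_and_derivs (m : ℕ) (hm : 1 ≤ m) (ρ : Fin m → ℝ)
    (x : Fin m → ℝ) (hx : x ∈ frontier (simplex m)) :
    StrictMonoOn (fun s => Bfun m s ρ x) (Set.Icc 0 1) ∧
    Bfun m 0 ρ x = 0 ∧
    deriv (fun s => Bfun m s ρ x) 0 = 0 ∧
    ∀ s ∈ Set.Ioo (0 : ℝ) 1, 0 < deriv (fun s' => Bfun m s' ρ x) s := by
  classical
  set E : ℝ := ∑ i, Real.exp (ρ i) with hE_def
  have hEnn : (0:ℝ) ≤ E := Finset.sum_nonneg fun i _ => (Real.exp_pos _).le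
  have hEpos : (0:ℝ) < 1 + E := by linarith
  set L : ℝ := Real.log (1 + E) with hL_def
  set μ : Fin m → ℝ := mu m ρ with hμ_def
  have hμpos : ∀ i, 0 < μ i := fun i => div_pos (Real.exp_pos _) hEpos
  have hμsum : ∑ i, μ i = E / (1 + E) := by
    rw [hμ_def]; unfold mu; rw [← Finset.sum_div]
  set μ0 : ℝ := 1 / (1 + E) with hμ0_def
  have hμ0pos : 0 < μ0 := by positivity
  have hμ0eq : 1 - ∑ i, μ i = μ0 := by
    rw [hμsum, hμ0_def]; field_simp; ring
  have hlogμ : ∀ i, Real.log (μ i) = ρ i - L := by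
    intro i
    rw [hμ_def]; unfold mu
    rw [Real.log_div (Real.exp_ne_zero _) (ne_of_gt hEpos), Real.log_exp]
  have hlogμ0 : Real.log μ0 = -L := by
    rw [hμ0_def, one_div, Real.log_inv]
  -- x facts
  have hclosed : IsClosed (simplex m) := by
    have hrep : simplex m =
        (⋂ i, {l : Fin m → ℝ | 0 ≤ l i}) ∩ {l | ∑ i, l i ≤ 1} := by
      ext l; simp [simplex, Set.mem_iInter]
    rw [hrep]
    exact (isClosed_iInter fun i =>
        isClosed_le continuous_const (continuous_apply i)).inter
      (isClosed_le (continuous_finset_sum _ fun i _ => continuous_apply i) continuous_const)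
  have hxS : x ∈ simplex m := by
    have := frontier_subset_closure (s := simplex m) hx
    rwa [hclosed.closure_eq] at this
  obtain ⟨hxnn, hxsum⟩ := hxS
  set x0 : ℝ := 1 - ∑ i, x i with hx0_def
  have hx0nn : 0 ≤ x0 := by rw [hx0_def]; linarith
  -- x ≠ μ
  have hxne : ∃ i, x i ≠ μ i := by
    by_contra h
    push_neg at h
    have hxeq : x = μ := funext h
    have hU : IsOpen {l : Fin m → ℝ | (∀ i, 0 < l i) ∧ ∑ i, l i < 1} := by
      have hrep : {l : Fin m → ℝ | (∀ i, 0 < l i) ∧ ∑ i, l i < 1} =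
          (⋂ i, {l : Fin m → ℝ | 0 < l i}) ∩ {l | ∑ i, l i < 1} := by
        ext l; simp [Set.mem_iInter]
      rw [hrep]
      exact (isOpen_iInter_of_finite fun i =>
          isOpen_lt continuous_const (continuous_apply i)).inter
        (isOpen_lt (continuous_finset_sum _ fun i _ => continuous_apply i) continuous_const)
    have hUsub : {l : Fin m → ℝ | (∀ i, 0 < l i) ∧ ∑ i, l i < 1} ⊆ simplex m :=
      fun l hl => ⟨fun i => (hl.1 i).le, hl.2.le⟩
    have hμU : μ ∈ {l : Fin m → ℝ | (∀ i, 0 < l i) ∧ ∑ i, l i < 1} := by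
      refine ⟨hμpos, ?_⟩
      rw [hμsum]
      rw [div_lt_one hEpos]; linarith
    have hμint : μ ∈ interior (simplex m) := interior_maximal hUsub hU hμU
    rw [hxeq] at hx
    exact hx.2 hμint
  set d : Fin m → ℝ := fun i => x i - μ i with hd_def
  set d0 : ℝ := x0 - μ0 with hd0_def
  have hd0sum : d0 = -∑ i, d i := by
    rw [hd0_def, hd_def, hx0_def, ← hμ0eq, Finset.sum_sub_distrib]; ring
  set lam : ℝ → Fin m → ℝ := fun s i => (1 - s) * μ i + s * x i with hlam_def
  set lam0 : ℝ → ℝ := fun s => (1 - s) * μ0 + s * x0 with hlam0_def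
  have hlam0eq : ∀ s, lam0 s = 1 - ∑ i, lam s i := by
    intro s
    rw [hlam0_def, hlam_def]
    simp only
    rw [Finset.sum_add_distrib, ← Finset.mul_sum, ← Finset.mul_sum, hμsum]
    rw [hμ0_def, hx0_def]
    field_simp
    ring
  have hlamval : ∀ s i, lam s i = μ i + s * d i := by
    intro s i; rw [hlam_def, hd_def]; ring
  have hlam0val : ∀ s, lam0 s = μ0 + s * d0 := by
    intro s; rw [hlam0_def, hd0_def]; ring
  have hlampos : ∀ s ∈ Set.Ico (0:ℝ) 1, ∀ i, 0 < lam s i := by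
    intro s hs i
    rw [hlam_def]
    have h1 : 0 < (1 - s) * μ i := mul_pos (by linarith [hs.2]) (hμpos i)
    have h2 : 0 ≤ s * x i := mul_nonneg hs.1 (hxnn i)
    simpa using add_pos_of_pos_of_nonneg h1 h2
  have hlam0pos : ∀ s ∈ Set.Ico (0:ℝ) 1, 0 < lam0 s := by
    intro s hs
    rw [hlam0_def]
    have h1 : 0 < (1 - s) * μ0 := mul_pos (by linarith [hs.2]) hμ0pos
    have h2 : 0 ≤ s * x0 := mul_nonneg hs.1 hx0nn
    simpa using add_pos_of_pos_of_nonneg h1 h2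
  -- B as explicit function
  have hfB : ∀ s, Bfun m s ρ x =
      L + (lam0 s * Real.log (lam0 s) + ∑ i, lam s i * Real.log (lam s i))
        - ∑ i, ρ i * lam s i := by
    intro s
    unfold Bfun bfun ent
    rw [hlam0eq s]
  -- derivative
  set g : ℝ → ℝ := fun s =>
    d0 * Real.log (lam0 s) + ∑ i, d i * (Real.log (lam s i) - ρ i) with hg_def
  have hderiv : ∀ s, (∀ i, lam s i ≠ 0) → lam0 s ≠ 0 →
      HasDerivAt (fun s' => Bfun m s' ρ x) (g s) s := by
    intro s hne h0ne
    have hlin0 : HasDerivAt lam0 d0 s := by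
      have : HasDerivAt (fun t : ℝ => μ0 + t * d0) (d0) s := by
        simpa using ((hasDerivAt_id s).mul_const d0).const_add μ0
      convert this using 1
      funext t; rw [hlam0val t]
    have hlin : ∀ i, HasDerivAt (fun t => lam t i) (d i) s := by
      intro i
      have : HasDerivAt (fun t : ℝ => μ i + t * d i) (d i) s := by
        simpa using ((hasDerivAt_id s).mul_const (d i)).const_add (μ i)
      convert this using 1
      funext t; rw [hlamval t i]
    have h0 : HasDerivAt (fun t => lam0 t * Real.log (lam0 t))
        ((Real.log (lam0 s) + 1) * d0) s :=
      (Real.hasDerivAt_mul_log h0ne).comp s hlin0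
    have hi : ∀ i, HasDerivAt (fun t => lam t i * Real.log (lam t i))
        ((Real.log (lam s i) + 1) * d i) s := fun i =>
      by have := (Real.hasDerivAt_mul_log (hne i)).comp s (hlin i); exact this
    have hsum : HasDerivAt (fun t => ∑ i, lam t i * Real.log (lam t i))
        (∑ i, (Real.log (lam s i) + 1) * d i) s := HasDerivAt.fun_sum fun i _ => hi i
    have hsum2 : HasDerivAt (fun t => ∑ i, ρ i * lam t i) (∑ i, ρ i * d i) s :=
      HasDerivAt.fun_sum fun i _ => (hlin i).const_mul (ρ i)
    have htot : HasDerivAt (fun t =>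
        L + (lam0 t * Real.log (lam0 t) + ∑ i, lam t i * Real.log (lam t i))
          - ∑ i, ρ i * lam t i)
        ((Real.log (lam0 s) + 1) * d0 + ∑ i, (Real.log (lam s i) + 1) * d i
          - ∑ i, ρ i * d i) s :=
      ((h0.add hsum).const_add L).sub hsum2
    have heqf : (fun s' => Bfun m s' ρ x) = fun t =>
        L + (lam0 t * Real.log (lam0 t) + ∑ i, lam t i * Real.log (lam t i))
          - ∑ i, ρ i * lam t i := funext hfB
    rw [heqf]
    convert htot using 1
    rw [hg_def]
    have hsplit : ∑ i, (Real.log (lam s i) + 1) * d i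
        = (∑ i, d i * (Real.log (lam s i) - ρ i)) + (∑ i, ρ i * d i) + ∑ i, d i := by
      rw [← Finset.sum_add_distrib, ← Finset.sum_add_distrib]
      exact Finset.sum_congr rfl fun i _ => by ring
    rw [hsplit, hd0sum]
    ring
  -- g 0 = 0
  have hlam_zero : ∀ i, lam 0 i = μ i := by intro i; rw [hlamval]; ring
  have hlam0_zero : lam0 0 = μ0 := by rw [hlam0val]; ring
  have hg0 : g 0 = 0 := by
    rw [hg_def]
    simp only [hlam0_zero, hlogμ0]
    have : ∀ i, d i * (Real.log (lam 0 i) - ρ i) = d i * (-L) := by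
      intro i; rw [hlam_zero i, hlogμ i]; ring
    rw [Finset.sum_congr rfl fun i _ => this i]
    rw [← Finset.sum_mul]
    linear_combination (-L) * hd0sum
  -- B 0 = 0
  have hB0 : Bfun m 0 ρ x = 0 := by
    rw [hfB 0, hlam0_zero]
    have h1 : ∀ i, lam 0 i * Real.log (lam 0 i) = μ i * (ρ i - L) := by
      intro i; rw [hlam_zero i, hlogμ i]
    have h2 : ∀ i, ρ i * lam 0 i = ρ i * μ i := by intro i; rw [hlam_zero i]
    rw [Finset.sum_congr rfl fun i _ => h1 i, Finset.sum_congr rfl fun i _ => h2 i,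
      hlogμ0]
    have h3 : ∑ i, μ i * (ρ i - L) = (∑ i, ρ i * μ i) - (∑ i, μ i) * L := by
      rw [Finset.sum_mul, ← Finset.sum_sub_distrib]
      exact Finset.sum_congr rfl fun i _ => by ring
    rw [h3]
    have h4 : ∑ i, μ i = 1 - μ0 := by linarith [hμ0eq]
    rw [h4]; ring
  -- g positive on (0,1)
  have hgpos : ∀ s ∈ Set.Ioo (0:ℝ) 1, 0 < g s := by
    intro s hs
    have hsIco : s ∈ Set.Ico (0:ℝ) 1 := ⟨hs.1.le, hs.2⟩
    have hrw : g s = d0 * (Real.log (lam0 s) - Real.log μ0)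
        + ∑ i, d i * (Real.log (lam s i) - Real.log (μ i)) := by
      simp only [hg_def]
      have h1 : ∀ i, d i * (Real.log (lam s i) - ρ i)
          = d i * (Real.log (lam s i) - Real.log (μ i)) + d i * (-L) := by
        intro i; rw [hlogμ i]; ring
      rw [Finset.sum_congr rfl fun i _ => h1 i, Finset.sum_add_distrib,
        ← Finset.sum_mul, hlogμ0]
      linear_combination (-L) * hd0sum
    rw [hrw]
    have h0term : 0 ≤ d0 * (Real.log (lam0 s) - Real.log μ0) := by
      rw [hlam0val s]
      exact (key_pos μ0 d0 s hμ0pos hs.1 (by rw [← hlam0val]; exact hlam0pos s hsIco)).1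
    have hterm : ∀ i, 0 ≤ d i * (Real.log (lam s i) - Real.log (μ i)) := by
      intro i
      rw [hlamval s i]
      exact (key_pos (μ i) (d i) s (hμpos i) hs.1
        (by rw [← hlamval]; exact hlampos s hsIco i)).1
    obtain ⟨j, hj⟩ := hxne
    have hjne : d j ≠ 0 := by rw [hd_def]; simpa [sub_eq_zero] using hj
    have hjpos : 0 < d j * (Real.log (lam s j) - Real.log (μ j)) := by
      rw [hlamval s j]
      exact (key_pos (μ j) (d j) s (hμpos j) hs.1
        (by rw [← hlamval]; exact hlampos s hsIco j)).2 hjne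
    have hsumpos : 0 < ∑ i, d i * (Real.log (lam s i) - Real.log (μ i)) :=
      Finset.sum_pos' (fun i _ => hterm i) ⟨j, Finset.mem_univ j, hjpos⟩
    linarith
  -- deriv values
  have hderiv_eq : ∀ s ∈ Set.Ico (0:ℝ) 1,
      deriv (fun s' => Bfun m s' ρ x) s = g s := by
    intro s hs
    exact (hderiv s (fun i => (hlampos s hs i).ne') (hlam0pos s hs).ne').deriv
  have hderiv0 : deriv (fun s' => Bfun m s' ρ x) 0 = 0 := by
    rw [hderiv_eq 0 ⟨le_refl 0, one_pos⟩, hg0]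
  have hderivpos : ∀ s ∈ Set.Ioo (0:ℝ) 1, 0 < deriv (fun s' => Bfun m s' ρ x) s := by
    intro s hs
    rw [hderiv_eq s ⟨hs.1.le, hs.2⟩]
    exact hgpos s hs
  -- continuity
  have hcont : Continuous (fun s => Bfun m s ρ x) := by
    have heqf : (fun s => Bfun m s ρ x) = fun t =>
        L + (lam0 t * Real.log (lam0 t) + ∑ i, lam t i * Real.log (lam t i))
          - ∑ i, ρ i * lam t i := funext hfB
    rw [heqf]
    have hc0 : Continuous lam0 := by
      rw [hlam0_def]
      exact ((continuous_const.sub continuous_id).mul continuous_const).add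
        (continuous_id.mul continuous_const)
    have hci : ∀ i, Continuous (fun t => lam t i) := by
      intro i; rw [hlam_def]
      exact ((continuous_const.sub continuous_id).mul continuous_const).add
        (continuous_id.mul continuous_const)
    refine Continuous.sub ?_ (continuous_finset_sum _ fun i _ => continuous_const.mul (hci i))
    refine Continuous.add continuous_const ?_
    exact (Real.continuous_mul_log.comp hc0).add
      (continuous_finset_sum _ fun i _ => Real.continuous_mul_log.comp (hci i))
  have hmono : StrictMonoOn (fun s => Bfun m s ρ x) (Set.Icc 0 1) := by
    apply strictMonoOn_of_deriv_pos (convex_Icc 0 1) hcont.continuousOn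
    intro s hs
    rw [interior_Icc] at hs
    exact hderivpos s hs
  exact ⟨hmono, hB0, hderiv0, hderivpos⟩
end
end

section
/- For every ρ ∈ ℝ^m and every x ∈ ∂Δ, the second partial derivative of B in s at s = 0 equals B_ss(0,ρ,x) = Σ_{i=0}^m (x_i − μ_i(ρ))² / μ_i(ρ), and this quantity is strictly positive. -/
open MeasureTheory Real Filter Set

noncomputable section

lemma phi_hasDeriv (a b s : ℝ) (h : 0 < a + s * b) :
    HasDerivAt (fun t => (a + t * b) * Real.log (a + t * b))
      (b * (Real.log (a + s * b) + 1)) s := by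
  have hl : HasDerivAt (fun t : ℝ => a + t * b) b s := by
    simpa using ((hasDerivAt_id s).mul_const b).const_add a
  have hlog : HasDerivAt (fun t => Real.log (a + t * b)) (b / (a + s * b)) s := by
    have := (Real.hasDerivAt_log h.ne').comp s hl
    simpa [Function.comp_def, div_eq_mul_inv, mul_comm] using this
  have := hl.mul hlog
  refine this.congr_deriv ?_
  rw [mul_div_assoc', mul_div_cancel_left₀ _ h.ne']
  ring

lemma psi_hasDeriv (a b s : ℝ) (h : 0 < a + s * b) :
    HasDerivAt (fun t => b * (Real.log (a + t * b) + 1)) (b ^ 2 / (a + s * b)) s := by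
  have hl : HasDerivAt (fun t : ℝ => a + t * b) b s := by
    simpa using ((hasDerivAt_id s).mul_const b).const_add a
  have hlog : HasDerivAt (fun t => Real.log (a + t * b)) (b / (a + s * b)) s := by
    have := (Real.hasDerivAt_log h.ne').comp s hl
    simpa [Function.comp_def, div_eq_mul_inv, mul_comm] using this
  have := (hlog.add_const 1).const_mul b
  refine this.congr_deriv ?_
  rw [sq, mul_div_assoc]

/-- B_ss(0,ρ,x) = Σ_{i=0}^m (x_i − μ_i(ρ))²/μ_i(ρ) > 0. -/
theorem B_second_deriv_at_zero (m : ℕ) (hm : 1 ≤ m) (ρ : Fin m → ℝ)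
    (x : Fin m → ℝ) (hx : x ∈ frontier (simplex m)) :
    deriv (deriv (fun s => Bfun m s ρ x)) 0
        = ((1 - ∑ i, x i) - (1 - ∑ i, mu m ρ i)) ^ 2 / (1 - ∑ i, mu m ρ i)
          + ∑ i, (x i - mu m ρ i) ^ 2 / mu m ρ i ∧
    0 < ((1 - ∑ i, x i) - (1 - ∑ i, mu m ρ i)) ^ 2 / (1 - ∑ i, mu m ρ i)
          + ∑ i, (x i - mu m ρ i) ^ 2 / mu m ρ i := by
  have hTpos : (0:ℝ) < 1 + ∑ j, Real.exp (ρ j) := by positivity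
  have hmu_pos : ∀ i, 0 < mu m ρ i := fun i => div_pos (Real.exp_pos _) hTpos
  have hsum_mu : ∑ i, mu m ρ i = (∑ j, Real.exp (ρ j)) / (1 + ∑ j, Real.exp (ρ j)) := by
    simp [mu, Finset.sum_div]
  have hmu0_pos : 0 < 1 - ∑ i, mu m ρ i := by
    rw [hsum_mu]
    rw [sub_pos, div_lt_one hTpos]
    linarith
  set μ0 := 1 - ∑ i, mu m ρ i with hμ0def
  set d0 := (1 - ∑ i, x i) - μ0 with hd0
  set d : Fin m → ℝ := fun i => x i - mu m ρ i with hd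
  -- x ≠ μ
  have hxne : x ≠ mu m ρ := by
    intro hxmu
    have hopen : IsOpen {l : Fin m → ℝ | (∀ i, 0 < l i) ∧ ∑ i, l i < 1} := by
      have h1 : IsOpen {l : Fin m → ℝ | ∀ i, 0 < l i} := by
        have he : {l : Fin m → ℝ | ∀ i, 0 < l i} = ⋂ i, {l | 0 < l i} := by ext; simp
        rw [he]
        exact isOpen_iInter_of_finite fun i =>
          isOpen_lt continuous_const (continuous_apply i)
      have h2 : IsOpen {l : Fin m → ℝ | ∑ i, l i < 1} :=
        isOpen_lt (by continuity) continuous_const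
      exact h1.inter h2
    have hsub : {l : Fin m → ℝ | (∀ i, 0 < l i) ∧ ∑ i, l i < 1} ⊆ simplex m :=
      fun l hl => ⟨fun i => (hl.1 i).le, hl.2.le⟩
    have hmem : mu m ρ ∈ {l : Fin m → ℝ | (∀ i, 0 < l i) ∧ ∑ i, l i < 1} :=
      ⟨hmu_pos, by linarith⟩
    have hint : mu m ρ ∈ interior (simplex m) := interior_maximal hsub hopen hmem
    exact hx.2 (hxmu ▸ hint)
  have hexists : ∃ i, d i ≠ 0 := by
    by_contra h
    push_neg at h
    apply hxne
    funext i
    have := h i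
    simp only [hd, sub_eq_zero] at this
    exact this
  -- open neighborhood of 0 where all coordinates positive
  set U : Set ℝ := {s | 0 < μ0 + s * d0 ∧ ∀ i, 0 < mu m ρ i + s * d i} with hU
  have hUopen : IsOpen U := by
    have h1 : IsOpen {s : ℝ | 0 < μ0 + s * d0} :=
      isOpen_lt continuous_const (by continuity)
    have h2 : IsOpen {s : ℝ | ∀ i, 0 < mu m ρ i + s * d i} := by
      have he : {s : ℝ | ∀ i, 0 < mu m ρ i + s * d i}
          = ⋂ i, {s | 0 < mu m ρ i + s * d i} := by ext; simp
      rw [he]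
      exact isOpen_iInter_of_finite fun i =>
        isOpen_lt continuous_const (by continuity)
    exact h1.inter h2
  have hU0 : (0:ℝ) ∈ U := ⟨by simpa using hmu0_pos, fun i => by simpa using hmu_pos i⟩
  -- explicit form of B
  have hfeq : (fun s => Bfun m s ρ x) = fun s =>
      Real.log (1 + ∑ j, Real.exp (ρ j))
        + (μ0 + s * d0) * Real.log (μ0 + s * d0)
        + (∑ i, (mu m ρ i + s * d i) * Real.log (mu m ρ i + s * d i))
        - ∑ i, (ρ i * mu m ρ i + s * (ρ i * d i)) := by
    funext s
    simp only [Bfun, bfun, ent]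
    have h1 : ∑ i, ((1 - s) * mu m ρ i + s * x i)
        = (1 - s) * (∑ i, mu m ρ i) + s * (∑ i, x i) := by
      rw [Finset.sum_add_distrib, ← Finset.mul_sum, ← Finset.mul_sum]
    have h2 : 1 - ((1 - s) * (∑ i, mu m ρ i) + s * (∑ i, x i)) = μ0 + s * d0 := by
      rw [hd0, hμ0def]; ring
    have h3 : (∑ i, ((1 - s) * mu m ρ i + s * x i) * Real.log ((1 - s) * mu m ρ i + s * x i))
        = ∑ i, (mu m ρ i + s * d i) * Real.log (mu m ρ i + s * d i) := by
      refine Finset.sum_congr rfl fun i _ => ?_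
      have : (1 - s) * mu m ρ i + s * x i = mu m ρ i + s * d i := by
        simp only [hd]; ring
      rw [this]
    have h4 : (∑ i, ρ i * ((1 - s) * mu m ρ i + s * x i))
        = ∑ i, (ρ i * mu m ρ i + s * (ρ i * d i)) := by
      refine Finset.sum_congr rfl fun i _ => ?_
      simp only [hd]; ring
    rw [h1, h2, h3, h4]; ring
  -- first derivative on U
  have hK : ∀ s ∈ U, HasDerivAt (fun t => Bfun m t ρ x)
      (d0 * (Real.log (μ0 + s * d0) + 1)
        + ∑ i, d i * (Real.log (mu m ρ i + s * d i) + 1)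
        - ∑ i, ρ i * d i) s := by
    intro s hs
    rw [hfeq]
    have h0 := phi_hasDeriv μ0 d0 s hs.1
    have hi : HasDerivAt (fun t => ∑ i, (mu m ρ i + t * d i) * Real.log (mu m ρ i + t * d i))
        (∑ i, d i * (Real.log (mu m ρ i + s * d i) + 1)) s :=
      HasDerivAt.fun_sum fun i _ => phi_hasDeriv (mu m ρ i) (d i) s (hs.2 i)
    have hlin : HasDerivAt (fun t => ∑ i, (ρ i * mu m ρ i + t * (ρ i * d i)))
        (∑ i, ρ i * d i) s := by
      refine HasDerivAt.fun_sum fun i _ => ?_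
      simpa using ((hasDerivAt_id s).mul_const (ρ i * d i)).const_add (ρ i * mu m ρ i)
    exact ((h0.const_add (Real.log (1 + ∑ j, Real.exp (ρ j)))).add hi).sub hlin
  have hdf : deriv (fun s => Bfun m s ρ x) =ᶠ[nhds 0] fun s =>
      d0 * (Real.log (μ0 + s * d0) + 1)
        + ∑ i, d i * (Real.log (mu m ρ i + s * d i) + 1)
        - ∑ i, ρ i * d i := by
    filter_upwards [hUopen.mem_nhds hU0] with s hs
    exact (hK s hs).deriv
  have h2d : HasDerivAt (fun s => d0 * (Real.log (μ0 + s * d0) + 1)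
        + ∑ i, d i * (Real.log (mu m ρ i + s * d i) + 1)
        - ∑ i, ρ i * d i)
      (d0 ^ 2 / μ0 + ∑ i, (d i) ^ 2 / mu m ρ i) 0 := by
    have h0 : HasDerivAt (fun t => d0 * (Real.log (μ0 + t * d0) + 1)) (d0 ^ 2 / μ0) 0 := by
      have := psi_hasDeriv μ0 d0 0 (by simpa using hmu0_pos)
      simpa using this
    have hi : HasDerivAt (fun t => ∑ i, d i * (Real.log (mu m ρ i + t * d i) + 1))
        (∑ i, (d i) ^ 2 / mu m ρ i) 0 := by
      refine HasDerivAt.fun_sum fun i _ => ?_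
      have := psi_hasDeriv (mu m ρ i) (d i) 0 (by simpa using hmu_pos i)
      simpa using this
    exact (h0.add hi).sub_const _
  have hval : deriv (deriv (fun s => Bfun m s ρ x)) 0
      = d0 ^ 2 / μ0 + ∑ i, (d i) ^ 2 / mu m ρ i := by
    rw [hdf.deriv_eq]
    exact h2d.deriv
  constructor
  · rw [hval]
  · obtain ⟨i0, hi0⟩ := hexists
    have h1 : 0 ≤ d0 ^ 2 / μ0 := div_nonneg (sq_nonneg _) hmu0_pos.le
    have h2 : 0 < ∑ i, (x i - mu m ρ i) ^ 2 / mu m ρ i := by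
      refine Finset.sum_pos' (fun i _ => div_nonneg (sq_nonneg _) (hmu_pos i).le)
        ⟨i0, Finset.mem_univ _, div_pos ?_ (hmu_pos i0)⟩
      have : x i0 - mu m ρ i0 ≠ 0 := by simpa [hd] using hi0
      positivity
    linarith
end
end

section
/- For every ρ̃ ∈ ℝ^m and every x̃ ∈ ∂Δ, both B_s(s,ρ,x) → +∞ and B_ss(s,ρ,x) → +∞ as (s,ρ,x) → (1,ρ̃,x̃) with (s,ρ,x) ∈ (0,1) × ℝ^m × ∂Δ. -/
open MeasureTheory Real Filter Set

noncomputable section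

open Topology

namespace BAux

variable {m : ℕ}

/-- augmented zeroth coordinate -/
def z0 (m : ℕ) (x : Fin m → ℝ) : ℝ := 1 - ∑ i, x i

/-- the curve λ(s) -/
def ffn (m : ℕ) (ρ x : Fin m → ℝ) (s : ℝ) : Fin m → ℝ :=
  fun i => (1 - s) * mu m ρ i + s * x i

/-- first derivative formula -/
def D1 (m : ℕ) (ρ x : Fin m → ℝ) (s : ℝ) : ℝ :=
  (z0 m x - z0 m (mu m ρ)) * Real.log (z0 m (ffn m ρ x s))
  + ∑ i, (x i - mu m ρ i) * Real.log (ffn m ρ x s i)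
  - ∑ i, ρ i * (x i - mu m ρ i)

/-- second derivative formula -/
def D2 (m : ℕ) (ρ x : Fin m → ℝ) (s : ℝ) : ℝ :=
  (z0 m x - z0 m (mu m ρ)) ^ 2 / z0 m (ffn m ρ x s)
  + ∑ i, (x i - mu m ρ i) ^ 2 / ffn m ρ x s i

lemma denom_pos (ρ : Fin m → ℝ) : 0 < 1 + ∑ j, Real.exp (ρ j) := by positivity

lemma mu_pos (ρ : Fin m → ℝ) (i : Fin m) : 0 < mu m ρ i :=
  div_pos (Real.exp_pos _) (denom_pos ρ)

lemma mu_le_one (ρ : Fin m → ℝ) (i : Fin m) : mu m ρ i ≤ 1 := by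
  rw [mu, div_le_one (denom_pos ρ)]
  have h : Real.exp (ρ i) ≤ ∑ j, Real.exp (ρ j) :=
    Finset.single_le_sum (fun j _ => (Real.exp_pos (ρ j)).le) (Finset.mem_univ i)
  linarith

lemma mu0_pos (ρ : Fin m → ℝ) : 0 < z0 m (mu m ρ) := by
  have h : ∑ i, mu m ρ i = (∑ i, Real.exp (ρ i)) / (1 + ∑ j, Real.exp (ρ j)) := by
    rw [Finset.sum_div]; rfl
  rw [z0, h, sub_pos, div_lt_one (denom_pos ρ)]
  linarith

lemma mu0_le_one (ρ : Fin m → ℝ) : z0 m (mu m ρ) ≤ 1 := by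
  have h : 0 ≤ ∑ i, mu m ρ i :=
    Finset.sum_nonneg fun i _ => (mu_pos ρ i).le
  simp only [z0]; linarith

lemma gg_eq (ρ x : Fin m → ℝ) (s : ℝ) :
    z0 m (ffn m ρ x s) = (1 - s) * z0 m (mu m ρ) + s * z0 m x := by
  simp only [z0, ffn, Finset.sum_add_distrib, ← Finset.mul_sum]
  ring

lemma ffn_pos (ρ x : Fin m → ℝ) {s : ℝ} (hs : s ∈ Set.Ioo (0:ℝ) 1)
    (hx : ∀ i, 0 ≤ x i) (i : Fin m) : 0 < ffn m ρ x s i := by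
  have h1 : 0 < (1 - s) * mu m ρ i := mul_pos (by linarith [hs.2]) (mu_pos ρ i)
  have h2 : 0 ≤ s * x i := mul_nonneg hs.1.le (hx i)
  simp only [ffn]; linarith

lemma gg_pos (ρ x : Fin m → ℝ) {s : ℝ} (hs : s ∈ Set.Ioo (0:ℝ) 1)
    (hx : 0 ≤ z0 m x) : 0 < z0 m (ffn m ρ x s) := by
  rw [gg_eq]
  have h1 : 0 < (1 - s) * z0 m (mu m ρ) := mul_pos (by linarith [hs.2]) (mu0_pos ρ)
  have h2 : 0 ≤ s * z0 m x := mul_nonneg hs.1.le hx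
  linarith

lemma affine_hasDerivAt (a b s : ℝ) : HasDerivAt (fun s => (1 - s) * a + s * b) (b - a) s := by
  have h : HasDerivAt (fun s : ℝ => (1 - s) * a + s * b) ((-1) * a + 1 * b) s :=
    (((hasDerivAt_id s).const_sub 1).mul_const a).add ((hasDerivAt_id s).mul_const b)
  convert h using 1; ring

lemma hasDerivAt_ffn (ρ x : Fin m → ℝ) (s : ℝ) (i : Fin m) :
    HasDerivAt (fun s => ffn m ρ x s i) (x i - mu m ρ i) s :=
  affine_hasDerivAt (mu m ρ i) (x i) s

lemma hasDerivAt_gg (ρ x : Fin m → ℝ) (s : ℝ) :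
    HasDerivAt (fun s => z0 m (ffn m ρ x s)) (z0 m x - z0 m (mu m ρ)) s := by
  have h := affine_hasDerivAt (z0 m (mu m ρ)) (z0 m x) s
  have he : (fun s => z0 m (ffn m ρ x s)) = fun s => (1 - s) * z0 m (mu m ρ) + s * z0 m x :=
    funext fun s => gg_eq ρ x s
  rw [← he] at h
  exact h

lemma sum_slopes (ρ x : Fin m → ℝ) :
    (z0 m x - z0 m (mu m ρ)) + ∑ i, (x i - mu m ρ i) = 0 := by
  simp only [z0, Finset.sum_sub_distrib]
  ring

lemma hasDerivAt_B (ρ x : Fin m → ℝ) {s : ℝ} (hs : s ∈ Set.Ioo (0:ℝ) 1)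
    (hx : ∀ i, 0 ≤ x i) (hx0 : 0 ≤ z0 m x) :
    HasDerivAt (fun s => Bfun m s ρ x) (D1 m ρ x s) s := by
  have hg : 0 < z0 m (ffn m ρ x s) := gg_pos ρ x hs hx0
  have hf : ∀ i, 0 < ffn m ρ x s i := ffn_pos ρ x hs hx
  have hBeq : (fun s => Bfun m s ρ x) = fun s =>
      Real.log (1 + ∑ i, Real.exp (ρ i)) +
        (z0 m (ffn m ρ x s) * Real.log (z0 m (ffn m ρ x s)) +
          ∑ i, ffn m ρ x s i * Real.log (ffn m ρ x s i)) -
        ∑ i, ρ i * ffn m ρ x s i := by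
    funext s; rfl
  rw [hBeq]
  have h1 : HasDerivAt
      (fun s => z0 m (ffn m ρ x s) * Real.log (z0 m (ffn m ρ x s)))
      ((Real.log (z0 m (ffn m ρ x s)) + 1) * (z0 m x - z0 m (mu m ρ))) s :=
    by have := (Real.hasDerivAt_mul_log hg.ne').comp s (hasDerivAt_gg ρ x s); exact this
  have h2 : HasDerivAt
      (fun s => ∑ i, ffn m ρ x s i * Real.log (ffn m ρ x s i))
      (∑ i, (Real.log (ffn m ρ x s i) + 1) * (x i - mu m ρ i)) s :=
    HasDerivAt.fun_sum fun i _ =>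
      by have := (Real.hasDerivAt_mul_log (hf i).ne').comp s (hasDerivAt_ffn ρ x s i); exact this
  have h3 : HasDerivAt
      (fun s => ∑ i, ρ i * ffn m ρ x s i)
      (∑ i, ρ i * (x i - mu m ρ i)) s :=
    HasDerivAt.fun_sum fun i _ => (hasDerivAt_ffn ρ x s i).const_mul (ρ i)
  have H := ((hasDerivAt_const s (Real.log (1 + ∑ i, Real.exp (ρ i)))).add (h1.add h2)).sub h3
  refine H.congr_deriv ?_
  symm
  have hsum := sum_slopes (m := m) ρ x
  have hexp : ∑ i, (Real.log (ffn m ρ x s i) + 1) * (x i - mu m ρ i)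
      = ∑ i, (x i - mu m ρ i) * Real.log (ffn m ρ x s i) + ∑ i, (x i - mu m ρ i) := by
    rw [← Finset.sum_add_distrib]
    exact Finset.sum_congr rfl fun i _ => by ring
  rw [hexp]
  simp only [D1]
  linear_combination -hsum

lemma hasDerivAt_D1 (ρ x : Fin m → ℝ) {s : ℝ} (hs : s ∈ Set.Ioo (0:ℝ) 1)
    (hx : ∀ i, 0 ≤ x i) (hx0 : 0 ≤ z0 m x) :
    HasDerivAt (fun s => D1 m ρ x s) (D2 m ρ x s) s := by
  have hg : 0 < z0 m (ffn m ρ x s) := gg_pos ρ x hs hx0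
  have hf : ∀ i, 0 < ffn m ρ x s i := ffn_pos ρ x hs hx
  have h1 : HasDerivAt
      (fun s => (z0 m x - z0 m (mu m ρ)) * Real.log (z0 m (ffn m ρ x s)))
      ((z0 m x - z0 m (mu m ρ)) * ((z0 m (ffn m ρ x s))⁻¹ * (z0 m x - z0 m (mu m ρ)))) s :=
    ((Real.hasDerivAt_log hg.ne').comp s (hasDerivAt_gg ρ x s)).const_mul _
  have h2 : HasDerivAt
      (fun s => ∑ i, (x i - mu m ρ i) * Real.log (ffn m ρ x s i))
      (∑ i, (x i - mu m ρ i) * ((ffn m ρ x s i)⁻¹ * (x i - mu m ρ i))) s :=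
    HasDerivAt.fun_sum fun i _ =>
      by have := ((Real.hasDerivAt_log (hf i).ne').comp s (hasDerivAt_ffn ρ x s i)).const_mul (x i - mu m ρ i); exact this
  have H := (h1.add h2).sub_const (∑ i, ρ i * (x i - mu m ρ i))
  refine H.congr_deriv ?_
  symm
  simp only [D2]
  congr 1
  · ring
  · exact Finset.sum_congr rfl fun i _ => by ring

lemma term_ge_log {s c xv mv : ℝ} (hs0 : 0 < s) (hs1 : s < 1) (hc : 0 < c) (hc1 : c ≤ 1)
    (hx0 : 0 ≤ xv) (hx1 : xv ≤ 1) (hmc : c ≤ mv) (hm1 : mv ≤ 1) :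
    Real.log c ≤ (xv - mv) * Real.log ((1 - s) * mv + s * xv) := by
  have hm0 : 0 < mv := lt_of_lt_of_le hc hmc
  have hf0 : 0 < (1 - s) * mv + s * xv := by nlinarith
  have hf1 : (1 - s) * mv + s * xv ≤ 1 := by nlinarith
  have hlf0 : Real.log ((1 - s) * mv + s * xv) ≤ 0 := Real.log_nonpos hf0.le hf1
  rcases le_or_gt mv xv with h | h
  · have hfm : mv ≤ (1 - s) * mv + s * xv := by nlinarith
    have h1 : Real.log c ≤ Real.log ((1 - s) * mv + s * xv) :=
      Real.log_le_log hc (le_trans hmc hfm)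
    nlinarith [mul_nonneg (by linarith : (0:ℝ) ≤ 1 - (xv - mv))
      (by linarith : (0:ℝ) ≤ -Real.log ((1 - s) * mv + s * xv))]
  · have hlc : Real.log c ≤ 0 := Real.log_nonpos hc.le hc1
    nlinarith [mul_nonneg (by linarith : (0:ℝ) ≤ mv - xv)
      (by linarith : (0:ℝ) ≤ -Real.log ((1 - s) * mv + s * xv))]

lemma term_key {s c mv : ℝ} (hs0 : 0 < s) (hs1 : s < 1) (hc : 0 < c)
    (hmc : c ≤ mv) (hm1 : mv ≤ 1) :
    c * (-Real.log (1 - s)) ≤ (0 - mv) * Real.log ((1 - s) * mv + s * 0) := by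
  have hm0 : 0 < mv := lt_of_lt_of_le hc hmc
  have h1s : 0 < 1 - s := by linarith
  rw [mul_zero, add_zero, Real.log_mul h1s.ne' hm0.ne']
  have hl1 : Real.log (1 - s) ≤ 0 := Real.log_nonpos h1s.le (by linarith)
  have hl2 : Real.log mv ≤ 0 := Real.log_nonpos hm0.le hm1
  nlinarith [mul_nonneg (by linarith : (0:ℝ) ≤ mv - c) (by linarith : (0:ℝ) ≤ -Real.log (1 - s)),
    mul_nonneg hm0.le (by linarith : (0:ℝ) ≤ -Real.log mv)]

end BAux

namespace BAux

variable {m : ℕ}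

lemma frontier_simplex_sub {x : Fin m → ℝ} (hx : x ∈ frontier (simplex m)) :
    x ∈ simplex m ∧ ((∃ i, x i = 0) ∨ ∑ i, x i = 1) := by
  have hclosed : IsClosed (simplex m) := by
    have heq : simplex m = (⋂ i, {l : Fin m → ℝ | 0 ≤ l i}) ∩ {l | ∑ i, l i ≤ 1} := by
      ext l; simp [simplex]
    rw [heq]
    exact IsClosed.inter (isClosed_iInter fun i => isClosed_le continuous_const (continuous_apply i))
      (isClosed_le (continuous_finset_sum _ fun i _ => continuous_apply i) continuous_const)
  have hxs : x ∈ simplex m := by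
    have := frontier_subset_closure hx
    rwa [hclosed.closure_eq] at this
  refine ⟨hxs, ?_⟩
  have hopen : IsOpen ((⋂ i, {l : Fin m → ℝ | 0 < l i}) ∩ {l | ∑ i, l i < 1}) :=
    IsOpen.inter (isOpen_iInter_of_finite fun i => isOpen_lt continuous_const (continuous_apply i))
      (isOpen_lt (continuous_finset_sum _ fun i _ => continuous_apply i) continuous_const)
  have hsub : ((⋂ i, {l : Fin m → ℝ | 0 < l i}) ∩ {l | ∑ i, l i < 1}) ⊆ simplex m := by
    intro l hl
    simp only [Set.mem_inter_iff, Set.mem_iInter, Set.mem_setOf_eq] at hl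
    exact ⟨fun i => (hl.1 i).le, hl.2.le⟩
  have hnotint : x ∉ interior (simplex m) := hx.2
  have hnot : x ∉ ((⋂ i, {l : Fin m → ℝ | 0 < l i}) ∩ {l | ∑ i, l i < 1}) :=
    fun h => hnotint (hopen.subset_interior_iff.mpr hsub h)
  simp only [Set.mem_inter_iff, Set.mem_iInter, Set.mem_setOf_eq, not_and_or, not_forall,
    not_lt] at hnot
  rcases hnot with ⟨i, hi⟩ | h
  · exact Or.inl ⟨i, le_antisymm hi (hxs.1 i)⟩
  · exact Or.inr (le_antisymm hxs.2 h)

lemma x_le_one {x : Fin m → ℝ} (hx : x ∈ simplex m) (i : Fin m) : x i ≤ 1 :=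
  le_trans (Finset.single_le_sum (fun j _ => hx.1 j) (Finset.mem_univ i)) hx.2

lemma z0_nonneg {x : Fin m → ℝ} (hx : x ∈ simplex m) : 0 ≤ z0 m x := by
  simp only [z0]; linarith [hx.2]

lemma z0_le_one {x : Fin m → ℝ} (hx : x ∈ simplex m) : z0 m x ≤ 1 := by
  have : 0 ≤ ∑ i, x i := Finset.sum_nonneg fun i _ => hx.1 i
  simp only [z0]; linarith

lemma D1_lb (hm : 1 ≤ m) (ρ x : Fin m → ℝ) (hx : x ∈ simplex m)
    (hzero : (∃ j, x j = 0) ∨ ∑ i, x i = 1) {s : ℝ} (hs : s ∈ Set.Ioo (0:ℝ) 1)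
    {c K : ℝ} (hc : 0 < c) (hc1 : c ≤ 1)
    (hmu : ∀ i, c ≤ mu m ρ i) (hmu0 : c ≤ z0 m (mu m ρ)) (hK : ∑ i, |ρ i| ≤ K) :
    c * (-Real.log (1 - s)) + (m : ℝ) * Real.log c - K ≤ D1 m ρ x s := by
  have hρb : ∑ i, ρ i * (x i - mu m ρ i) ≤ K := by
    refine le_trans (Finset.sum_le_sum fun i _ => ?_) hK
    have hd : |x i - mu m ρ i| ≤ 1 :=
      abs_le.mpr ⟨by linarith [hx.1 i, mu_le_one ρ i], by linarith [x_le_one hx i, (hmu i), hc]⟩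
    calc ρ i * (x i - mu m ρ i) ≤ |ρ i * (x i - mu m ρ i)| := le_abs_self _
      _ = |ρ i| * |x i - mu m ρ i| := abs_mul _ _
      _ ≤ |ρ i| * 1 := mul_le_mul_of_nonneg_left hd (abs_nonneg _)
      _ = |ρ i| := mul_one _
  have hterm : ∀ i, Real.log c ≤ (x i - mu m ρ i) * Real.log (ffn m ρ x s i) := fun i =>
    term_ge_log hs.1 hs.2 hc hc1 (hx.1 i) (x_le_one hx i) (hmu i) (mu_le_one ρ i)
  have hgterm : Real.log c ≤
      (z0 m x - z0 m (mu m ρ)) * Real.log (z0 m (ffn m ρ x s)) := by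
    rw [gg_eq]
    exact term_ge_log hs.1 hs.2 hc hc1 (z0_nonneg hx) (z0_le_one hx) hmu0 (mu0_le_one ρ)
  rcases hzero with ⟨j, hj⟩ | hsum1
  · -- some coordinate of x is zero
    have hkey : c * (-Real.log (1 - s)) ≤ (x j - mu m ρ j) * Real.log (ffn m ρ x s j) := by
      have hfj : ffn m ρ x s j = (1 - s) * mu m ρ j + s * 0 := by simp [ffn, hj]
      rw [hfj, hj]
      exact term_key hs.1 hs.2 hc (hmu j) (mu_le_one ρ j)
    have hsplit : ∑ i, (x i - mu m ρ i) * Real.log (ffn m ρ x s i)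
        = (x j - mu m ρ j) * Real.log (ffn m ρ x s j)
          + ∑ i ∈ Finset.univ.erase j, (x i - mu m ρ i) * Real.log (ffn m ρ x s i) :=
      (Finset.add_sum_erase _ _ (Finset.mem_univ j)).symm
    have hrest : ((m : ℝ) - 1) * Real.log c ≤
        ∑ i ∈ Finset.univ.erase j, (x i - mu m ρ i) * Real.log (ffn m ρ x s i) := by
      have := Finset.card_nsmul_le_sum (Finset.univ.erase j)
        (fun i => (x i - mu m ρ i) * Real.log (ffn m ρ x s i)) (Real.log c)
        (fun i _ => hterm i)
      rwa [Finset.card_erase_of_mem (Finset.mem_univ j), Finset.card_univ, Fintype.card_fin,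
        nsmul_eq_mul, Nat.cast_sub hm, Nat.cast_one] at this
    simp only [D1]
    rw [hsplit]
    linarith
  · -- the zeroth augmented coordinate is zero
    have hz : z0 m x = 0 := by simp [z0, hsum1]
    have hkey : c * (-Real.log (1 - s)) ≤
        (z0 m x - z0 m (mu m ρ)) * Real.log (z0 m (ffn m ρ x s)) := by
      rw [gg_eq, hz]
      exact term_key hs.1 hs.2 hc hmu0 (mu0_le_one ρ)
    have hrest : (m : ℝ) * Real.log c ≤
        ∑ i, (x i - mu m ρ i) * Real.log (ffn m ρ x s i) := by
      have := Finset.card_nsmul_le_sum Finset.univ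
        (fun i => (x i - mu m ρ i) * Real.log (ffn m ρ x s i)) (Real.log c)
        (fun i _ => hterm i)
      rwa [Finset.card_univ, Fintype.card_fin, nsmul_eq_mul] at this
    simp only [D1]
    linarith

lemma D2_lb (ρ x : Fin m → ℝ) (hx : x ∈ simplex m)
    (hzero : (∃ j, x j = 0) ∨ ∑ i, x i = 1) {s : ℝ} (hs : s ∈ Set.Ioo (0:ℝ) 1)
    {c : ℝ} (hc : 0 < c) (hmu : ∀ i, c ≤ mu m ρ i) (hmu0 : c ≤ z0 m (mu m ρ)) :
    c / (1 - s) ≤ D2 m ρ x s := by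
  have h1s : (0:ℝ) < 1 - s := by linarith [hs.2]
  have hg : 0 < z0 m (ffn m ρ x s) := gg_pos ρ x hs (z0_nonneg hx)
  have hf : ∀ i, 0 < ffn m ρ x s i := ffn_pos ρ x hs hx.1
  have hsumnn : (0:ℝ) ≤ ∑ i, (x i - mu m ρ i) ^ 2 / ffn m ρ x s i :=
    Finset.sum_nonneg fun i _ => div_nonneg (sq_nonneg _) (hf i).le
  have hgnn : (0:ℝ) ≤ (z0 m x - z0 m (mu m ρ)) ^ 2 / z0 m (ffn m ρ x s) :=
    div_nonneg (sq_nonneg _) hg.le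
  rcases hzero with ⟨j, hj⟩ | hsum1
  · have hm0 : 0 < mu m ρ j := mu_pos ρ j
    have hkey : c / (1 - s) ≤ (x j - mu m ρ j) ^ 2 / ffn m ρ x s j := by
      have hfj : ffn m ρ x s j = (1 - s) * mu m ρ j := by simp [ffn, hj]
      rw [hfj, hj]
      rw [div_le_div_iff₀ h1s (by positivity)]
      nlinarith [mul_nonneg (mul_nonneg hm0.le (by linarith [hmu j] : (0:ℝ) ≤ mu m ρ j - c)) h1s.le]
    have hle : (x j - mu m ρ j) ^ 2 / ffn m ρ x s j ≤
        ∑ i, (x i - mu m ρ i) ^ 2 / ffn m ρ x s i :=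
      Finset.single_le_sum (f := fun i => (x i - mu m ρ i) ^ 2 / ffn m ρ x s i)
        (fun i _ => div_nonneg (sq_nonneg _) (hf i).le) (Finset.mem_univ j)
    simp only [D2]
    linarith
  · have hz : z0 m x = 0 := by simp [z0, hsum1]
    have hm0 : 0 < z0 m (mu m ρ) := mu0_pos ρ
    have hkey : c / (1 - s) ≤ (z0 m x - z0 m (mu m ρ)) ^ 2 / z0 m (ffn m ρ x s) := by
      rw [gg_eq, hz]
      rw [mul_zero, add_zero, div_le_div_iff₀ h1s (by positivity)]
      nlinarith [mul_nonneg (mul_nonneg hm0.le (by linarith : (0:ℝ) ≤ z0 m (mu m ρ) - c)) h1s.le]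
    simp only [D2]
    linarith

end BAux


open BAux in
/-- B_s → +∞ and B_ss → +∞ as (s,ρ,x) → (1,ρ̃,x̃) in (0,1) × ℝ^m × ∂Δ. -/
theorem B_s_B_ss_tendsto_atTop (m : ℕ) (hm : 1 ≤ m) (ρt : Fin m → ℝ)
    (xt : Fin m → ℝ) (hxt : xt ∈ frontier (simplex m)) :
    Filter.Tendsto (fun q : ℝ × (Fin m → ℝ) × (Fin m → ℝ) =>
        deriv (fun s => Bfun m s q.2.1 q.2.2) q.1)
      (nhdsWithin (1, ρt, xt)
        (Set.Ioo (0 : ℝ) 1 ×ˢ ((Set.univ : Set (Fin m → ℝ)) ×ˢ frontier (simplex m))))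
      Filter.atTop ∧
    Filter.Tendsto (fun q : ℝ × (Fin m → ℝ) × (Fin m → ℝ) =>
        deriv (deriv (fun s => Bfun m s q.2.1 q.2.2)) q.1)
      (nhdsWithin (1, ρt, xt)
        (Set.Ioo (0 : ℝ) 1 ×ˢ ((Set.univ : Set (Fin m → ℝ)) ×ˢ frontier (simplex m))))
      Filter.atTop := by
  haveI : NeZero m := ⟨by omega⟩
  set S : Set (ℝ × (Fin m → ℝ) × (Fin m → ℝ)) :=
    Set.Ioo (0 : ℝ) 1 ×ˢ ((Set.univ : Set (Fin m → ℝ)) ×ˢ frontier (simplex m)) with hS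
  set F := nhdsWithin (1, ρt, xt) S with hF
  -- constants
  set I : ℝ := Finset.univ.inf' Finset.univ_nonempty (mu m ρt) with hI
  have hIpos : 0 < I := by
    rw [hI, Finset.lt_inf'_iff]
    exact fun i _ => mu_pos ρt i
  have hIle : ∀ i, I ≤ mu m ρt i := fun i => Finset.inf'_le _ (Finset.mem_univ i)
  set c : ℝ := min (z0 m (mu m ρt)) I / 2 with hc_def
  have hminpos : 0 < min (z0 m (mu m ρt)) I := lt_min (mu0_pos ρt) hIpos
  have hc : 0 < c := by positivity
  have hc1 : c ≤ 1 := by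
    have h1 : min (z0 m (mu m ρt)) I ≤ z0 m (mu m ρt) := min_le_left _ _
    have h2 := mu0_le_one (m := m) ρt
    rw [hc_def]; linarith
  have hcltmu : ∀ i, c < mu m ρt i := fun i => by
    have h1 : min (z0 m (mu m ρt)) I ≤ I := min_le_right _ _
    have := hIle i
    rw [hc_def]; linarith
  have hcltmu0 : c < z0 m (mu m ρt) := by
    have h1 : min (z0 m (mu m ρt)) I ≤ z0 m (mu m ρt) := min_le_left _ _
    rw [hc_def]; linarith [mu0_pos (m := m) ρt]
  set K : ℝ := ∑ i, |ρt i| + 1 with hK_def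
  -- filter facts
  have hmem : ∀ᶠ q in F, q ∈ S := eventually_mem_nhdsWithin
  have hρtend : Tendsto (fun q : ℝ × (Fin m → ℝ) × (Fin m → ℝ) => q.2.1) F (𝓝 ρt) :=
    ((continuous_fst.comp continuous_snd).tendsto _).mono_left nhdsWithin_le_nhds
  have hmucont : ∀ i, Continuous fun ρ : Fin m → ℝ => mu m ρ i := fun i =>
    (Real.continuous_exp.comp (continuous_apply i)).div
      (continuous_const.add (continuous_finset_sum _ fun j _ =>
        Real.continuous_exp.comp (continuous_apply j)))
      (fun ρ => by positivity)
  have hmu_ev : ∀ᶠ q in F, ∀ i, c ≤ mu m q.2.1 i := by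
    rw [eventually_all]
    intro i
    have h := ((hmucont i).continuousAt.tendsto.comp hρtend).eventually
      (eventually_gt_nhds (hcltmu i))
    exact h.mono fun q hq => hq.le
  have hmu0_ev : ∀ᶠ q in F, c ≤ z0 m (mu m q.2.1) := by
    have hcont : Continuous fun ρ : Fin m → ℝ => z0 m (mu m ρ) :=
      continuous_const.sub (continuous_finset_sum _ fun i _ => hmucont i)
    have h := (hcont.continuousAt.tendsto.comp hρtend).eventually
      (eventually_gt_nhds hcltmu0)
    exact h.mono fun q hq => hq.le
  have hK_ev : ∀ᶠ q in F, ∑ i, |q.2.1 i| ≤ K := by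
    have hcont : Continuous fun ρ : Fin m → ℝ => ∑ i, |ρ i| :=
      continuous_finset_sum _ fun i _ => (continuous_apply i).abs
    have hlt : ∑ i, |ρt i| < K := by rw [hK_def]; linarith
    have h := (hcont.continuousAt.tendsto.comp hρtend).eventually (eventually_lt_nhds hlt)
    exact h.mono fun q hq => hq.le
  -- s → 1 from the left
  have hstend1 : Tendsto (fun q : ℝ × (Fin m → ℝ) × (Fin m → ℝ) => q.1) F (𝓝 1) :=
    (continuous_fst.tendsto _).mono_left nhdsWithin_le_nhds
  have hs_ev : ∀ᶠ q in F, q.1 ∈ Set.Ioo (0:ℝ) 1 := hmem.mono fun q hq => hq.1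
  have h1s : Tendsto (fun q : ℝ × (Fin m → ℝ) × (Fin m → ℝ) => 1 - q.1) F (𝓝[>] 0) := by
    rw [tendsto_nhdsWithin_iff]
    constructor
    · have := (tendsto_const_nhds (x := (1:ℝ)) (f := F)).sub hstend1
      simpa using this
    · exact hs_ev.mono fun q hq => by simp [Set.mem_Ioi]; linarith [hq.2]
  -- lower bound functions tend to atTop
  have hφ1 : Tendsto (fun q : ℝ × (Fin m → ℝ) × (Fin m → ℝ) =>
      c * (-Real.log (1 - q.1)) + ((m : ℝ) * Real.log c - K)) F atTop := by
    apply tendsto_atTop_add_const_right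
    apply Tendsto.const_mul_atTop hc
    have hlog : Tendsto (fun q : ℝ × (Fin m → ℝ) × (Fin m → ℝ) =>
        Real.log (1 - q.1)) F atBot :=
      Real.tendsto_log_nhdsGT_zero.comp h1s
    exact tendsto_neg_atBot_atTop.comp hlog
  have hφ2 : Tendsto (fun q : ℝ × (Fin m → ℝ) × (Fin m → ℝ) =>
      c / (1 - q.1)) F atTop := by
    have hinv : Tendsto (fun q : ℝ × (Fin m → ℝ) × (Fin m → ℝ) =>
        (1 - q.1)⁻¹) F atTop := tendsto_inv_nhdsGT_zero.comp h1s
    have := Tendsto.const_mul_atTop hc hinv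
    simpa [div_eq_mul_inv] using this
  constructor
  · apply tendsto_atTop_mono' F _ hφ1
    filter_upwards [hmem, hmu_ev, hmu0_ev, hK_ev] with q hq hmu' hmu0' hK'
    have hsIoo : q.1 ∈ Set.Ioo (0:ℝ) 1 := hq.1
    obtain ⟨hxΔ, hzero⟩ := frontier_simplex_sub hq.2.2
    have hd := hasDerivAt_B q.2.1 q.2.2 hsIoo hxΔ.1 (z0_nonneg hxΔ)
    rw [hd.deriv]
    have := D1_lb hm q.2.1 q.2.2 hxΔ hzero hsIoo hc hc1 hmu' hmu0' hK'
    linarith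
  · apply tendsto_atTop_mono' F _ hφ2
    filter_upwards [hmem, hmu_ev, hmu0_ev] with q hq hmu' hmu0'
    have hsIoo : q.1 ∈ Set.Ioo (0:ℝ) 1 := hq.1
    obtain ⟨hxΔ, hzero⟩ := frontier_simplex_sub hq.2.2
    have hev : deriv (fun s => Bfun m s q.2.1 q.2.2) =ᶠ[𝓝 q.1] D1 m q.2.1 q.2.2 := by
      filter_upwards [Ioo_mem_nhds hsIoo.1 hsIoo.2] with s' hs'
      exact (hasDerivAt_B q.2.1 q.2.2 hs' hxΔ.1 (z0_nonneg hxΔ)).deriv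
    rw [hev.deriv_eq, (hasDerivAt_D1 q.2.1 q.2.2 hsIoo hxΔ.1 (z0_nonneg hxΔ)).deriv]
    exact D2_lb q.2.1 q.2.2 hxΔ hzero hsIoo hc hmu' hmu0'
end
end

section
/- For every ρ̃ ∈ ℝ^m, every x̃ ∈ ∂Δ, and all indices p, q ∈ {1,…,m}: B_{ρ_p}(s,ρ,x) → −(x̃_p − μ_p(ρ̃)) and B_{ρ_p ρ_q}(s,ρ,x) → δ_{pq} μ_p(ρ̃) − μ_p(ρ̃) μ_q(ρ̃) as (s,ρ,x) → (1,ρ̃,x̃) with (s,ρ,x) ∈ (0,1) × ℝ^m × ∂Δ. In particular, B_{ρ_p} and B_{ρ_p ρ_q} extend continuously from [0,1) × ℝ^m × ∂Δ to [0,1] × ℝ^m × ∂Δ. -/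
open MeasureTheory Real Filter Set
open Topology

noncomputable section

-- auxiliary
def Efun (m : ℕ) (ρ : Fin m → ℝ) : ℝ := 1 + ∑ j, Real.exp (ρ j)

def lam (m : ℕ) (s : ℝ) (ρ x : Fin m → ℝ) (i : Fin m) : ℝ := (1 - s) * mu m ρ i + s * x i

def lam0 (m : ℕ) (s : ℝ) (ρ x : Fin m → ℝ) : ℝ := 1 - ∑ i, lam m s ρ x i

def Dmu (m : ℕ) (ρ : Fin m → ℝ) (q i : Fin m) : ℝ :=
  (if i = q then mu m ρ q else 0) - mu m ρ i * mu m ρ q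

def lamd (m : ℕ) (s : ℝ) (ρ : Fin m → ℝ) (p i : Fin m) : ℝ := (1 - s) * Dmu m ρ p i

def lamdd (m : ℕ) (s : ℝ) (ρ : Fin m → ℝ) (p q i : Fin m) : ℝ :=
  (1 - s) * ((if i = p then Dmu m ρ q p else 0)
    - (Dmu m ρ q i * mu m ρ p + mu m ρ i * Dmu m ρ q p))

def G1 (m : ℕ) (s : ℝ) (ρ x : Fin m → ℝ) (p : Fin m) : ℝ :=
  mu m ρ p
    + ((-(∑ i, lamd m s ρ p i)) * (Real.log (lam0 m s ρ x) + 1)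
      + ∑ i, lamd m s ρ p i * (Real.log (lam m s ρ x i) + 1))
    - (lam m s ρ x p + ∑ i, ρ i * lamd m s ρ p i)

def G2 (m : ℕ) (s : ℝ) (ρ x : Fin m → ℝ) (p q : Fin m) : ℝ :=
  Dmu m ρ q p
    + (((-(∑ i, lamdd m s ρ p q i)) * (Real.log (lam0 m s ρ x) + 1)
        + (-(∑ i, lamd m s ρ p i)) * ((-(∑ i, lamd m s ρ q i)) / lam0 m s ρ x))
      + ∑ i, (lamdd m s ρ p q i * (Real.log (lam m s ρ x i) + 1)
        + lamd m s ρ p i * (lamd m s ρ q i / lam m s ρ x i)))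
    - (lamd m s ρ q p + (lamd m s ρ p q + ∑ i, ρ i * lamdd m s ρ p q i))

section basic
variable {m : ℕ}

lemma Efun_pos (ρ : Fin m → ℝ) : 0 < Efun m ρ := by
  have : (0:ℝ) ≤ ∑ j, Real.exp (ρ j) := Finset.sum_nonneg fun j _ => (Real.exp_pos _).le
  unfold Efun; linarith

lemma mu_pos (ρ : Fin m → ℝ) (i : Fin m) : 0 < mu m ρ i :=
  div_pos (Real.exp_pos _) (Efun_pos ρ)

lemma sum_exp_le (ρ : Fin m → ℝ) (i : Fin m) : Real.exp (ρ i) ≤ ∑ j, Real.exp (ρ j) :=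
  Finset.single_le_sum (fun j _ => (Real.exp_pos (ρ j)).le) (Finset.mem_univ i)

lemma mu_lt_one (ρ : Fin m → ℝ) (i : Fin m) : mu m ρ i < 1 := by
  have h := sum_exp_le ρ i
  have hE := Efun_pos ρ
  rw [mu, div_lt_one (by simpa [Efun] using hE)]
  linarith

lemma sum_mu_lt_one (ρ : Fin m → ℝ) : ∑ i, mu m ρ i < 1 := by
  have hE := Efun_pos ρ
  have : ∑ i, mu m ρ i = (∑ j, Real.exp (ρ j)) / (Efun m ρ) := by
    simp [mu, Efun, Finset.sum_div]
  rw [this, div_lt_one hE]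
  unfold Efun; linarith

lemma simplex_isClosed : IsClosed (simplex m) := by
  have : simplex m = (⋂ i, {l : Fin m → ℝ | 0 ≤ l i}) ∩ {l | ∑ i, l i ≤ 1} := by
    ext l; simp [simplex, Set.mem_iInter]
  rw [this]
  exact (isClosed_iInter fun i => isClosed_le continuous_const (continuous_apply i)).inter
    (isClosed_le (by continuity) continuous_const)

lemma frontier_subset_simplex : frontier (simplex m) ⊆ simplex m := by
  have h : IsClosed (simplex m) := simplex_isClosed
  exact h.frontier_subset

lemma lam_pos {s : ℝ} {x : Fin m → ℝ} (hs0 : 0 ≤ s) (hs1 : s < 1) (hx : x ∈ simplex m)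
    (ρ : Fin m → ℝ) (i : Fin m) : 0 < lam m s ρ x i := by
  have := mu_pos ρ i
  have hxi := hx.1 i
  have h1 : 0 < (1 - s) * mu m ρ i := mul_pos (by linarith) this
  have h2 : 0 ≤ s * x i := by positivity
  unfold lam; linarith

lemma lam_le_one {s : ℝ} {x : Fin m → ℝ} (hs0 : 0 ≤ s) (hs1 : s < 1) (hx : x ∈ simplex m)
    (ρ : Fin m → ℝ) (i : Fin m) : lam m s ρ x i ≤ 1 := by
  have h1 := (mu_lt_one ρ i).le
  have hxi : x i ≤ 1 := by
    have := hx.2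
    have h2 : ∑ j ∈ Finset.univ.erase i, x j ≥ 0 :=
      Finset.sum_nonneg fun j _ => hx.1 j
    have h3 : x i + ∑ j ∈ Finset.univ.erase i, x j = ∑ j, x j := by
      rw [Finset.add_sum_erase _ _ (Finset.mem_univ i)]
    linarith
  have : (1-s) * mu m ρ i ≤ (1-s) * 1 := by
    apply mul_le_mul_of_nonneg_left h1; linarith
  have h2 : s * x i ≤ s * 1 := by apply mul_le_mul_of_nonneg_left hxi hs0
  unfold lam; linarith

lemma lam0_eq (s : ℝ) (ρ x : Fin m → ℝ) :
    lam0 m s ρ x = (1 - s) * (1 - ∑ i, mu m ρ i) + s * (1 - ∑ i, x i) := by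
  unfold lam0 lam
  rw [Finset.sum_add_distrib, ← Finset.mul_sum, ← Finset.mul_sum]
  ring

lemma lam0_pos {s : ℝ} {x : Fin m → ℝ} (hs0 : 0 ≤ s) (hs1 : s < 1) (hx : x ∈ simplex m)
    (ρ : Fin m → ℝ) : 0 < lam0 m s ρ x := by
  rw [lam0_eq]
  have h1 := sum_mu_lt_one ρ
  have h2 : 0 ≤ s * (1 - ∑ i, x i) := mul_nonneg hs0 (by linarith [hx.2])
  nlinarith

lemma lam0_le_one {s : ℝ} {x : Fin m → ℝ} (hs0 : 0 ≤ s) (hs1 : s < 1) (hx : x ∈ simplex m)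
    (ρ : Fin m → ℝ) : lam0 m s ρ x ≤ 1 := by
  unfold lam0
  have : 0 ≤ ∑ i, lam m s ρ x i :=
    Finset.sum_nonneg fun i _ => (lam_pos hs0 hs1 hx ρ i).le
  linarith

end basic

section derivs
variable {m : ℕ}

lemma hasDerivAt_exp_update (ρ : Fin m → ℝ) (p i : Fin m) :
    HasDerivAt (fun r => Real.exp (Function.update ρ p r i))
      (if i = p then Real.exp (ρ p) else 0) (ρ p) := by
  by_cases h : i = p
  · subst h
    simpa using Real.hasDerivAt_exp (ρ i)
  · simp only [Function.update_of_ne h, if_neg h]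
    exact hasDerivAt_const _ _

lemma hasDerivAt_Efun_update (ρ : Fin m → ℝ) (p : Fin m) :
    HasDerivAt (fun r => Efun m (Function.update ρ p r)) (Real.exp (ρ p)) (ρ p) := by
  have h := HasDerivAt.sum (fun i (_ : i ∈ Finset.univ) => hasDerivAt_exp_update ρ p i)
  have h2 : (∑ i, if i = p then Real.exp (ρ p) else 0) = Real.exp (ρ p) := by
    simp [Finset.sum_ite_eq']
  unfold Efun
  simpa [h2] using h.const_add 1

lemma hasDerivAt_mu_update (ρ : Fin m → ℝ) (p i : Fin m) :
    HasDerivAt (fun r => mu m (Function.update ρ p r) i) (Dmu m ρ p i) (ρ p) := by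
  have hE := hasDerivAt_Efun_update ρ p
  have hnum := hasDerivAt_exp_update ρ p i
  have hne : Efun m ρ ≠ 0 := (Efun_pos ρ).ne'
  have h := hnum.fun_div hE (by simpa [Function.update_eq_self] using hne)
  have heq : (fun r => Real.exp (Function.update ρ p r i) / Efun m (Function.update ρ p r))
      = fun r => mu m (Function.update ρ p r) i := by
    funext r; simp [mu, Efun]
  rw [heq, Function.update_eq_self] at h
  refine h.congr_deriv (Eq.symm ?_)
  unfold Dmu mu Efun
  rw [eq_div_iff (by positivity)]
  by_cases hip : i = p
  · subst hip
    simp only [if_pos rfl, if_pos trivial]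
    have : (1 + ∑ j, Real.exp (ρ j)) ≠ 0 := by positivity
    field_simp
  · simp only [if_neg hip]
    have : (1 + ∑ j, Real.exp (ρ j)) ≠ 0 := by positivity
    field_simp
    ring

lemma hasDerivAt_lam_update (s : ℝ) (ρ x : Fin m → ℝ) (p i : Fin m) :
    HasDerivAt (fun r => lam m s (Function.update ρ p r) x i) (lamd m s ρ p i) (ρ p) := by
  have h := ((hasDerivAt_mu_update ρ p i).const_mul (1 - s)).add_const (s * x i)
  simpa [lam, lamd] using h

lemma hasDerivAt_lam0_update (s : ℝ) (ρ x : Fin m → ℝ) (p : Fin m) :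
    HasDerivAt (fun r => lam0 m s (Function.update ρ p r) x)
      (-(∑ i, lamd m s ρ p i)) (ρ p) := by
  have h := HasDerivAt.sum (fun i (_ : i ∈ Finset.univ) => hasDerivAt_lam_update s ρ x p i)
  simpa [lam0] using h.const_sub 1

lemma hasDerivAt_mul_log {f : ℝ → ℝ} {f' x : ℝ} (hf : HasDerivAt f f' x) (hx : f x ≠ 0) :
    HasDerivAt (fun y => f y * Real.log (f y)) (f' * (Real.log (f x) + 1)) x := by
  have h := hf.fun_mul ((Real.hasDerivAt_log hx).comp x hf)
  refine h.congr_deriv (Eq.symm ?_)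
  rw [Function.comp_apply]
  field_simp

end derivs

section derivB
variable {m : ℕ} {s : ℝ} {x : Fin m → ℝ}

lemma Bfun_eq (s : ℝ) (ρ x : Fin m → ℝ) :
    Bfun m s ρ x = Real.log (Efun m ρ)
      + (lam0 m s ρ x * Real.log (lam0 m s ρ x)
        + ∑ i, lam m s ρ x i * Real.log (lam m s ρ x i))
      - ∑ i, ρ i * lam m s ρ x i := by
  simp only [Bfun, bfun, ent, Efun, lam, lam0, mu]

lemma hasDerivAt_Bfun_update (hs0 : 0 ≤ s) (hs1 : s < 1) (hx : x ∈ simplex m)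
    (ρ : Fin m → ℝ) (p : Fin m) :
    HasDerivAt (fun r => Bfun m s (Function.update ρ p r) x) (G1 m s ρ x p) (ρ p) := by
  have hupd : Function.update ρ p (ρ p) = ρ := Function.update_eq_self p ρ
  have hlogE : HasDerivAt (fun r => Real.log (Efun m (Function.update ρ p r)))
      (mu m ρ p) (ρ p) := by
    have h := (hasDerivAt_Efun_update ρ p).log (by rw [hupd]; exact (Efun_pos ρ).ne')
    rw [hupd] at h
    have : Real.exp (ρ p) / Efun m ρ = mu m ρ p := by simp [mu, Efun]
    rwa [this] at h
  have h0 : HasDerivAt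
      (fun r => lam0 m s (Function.update ρ p r) x * Real.log (lam0 m s (Function.update ρ p r) x))
      ((-(∑ i, lamd m s ρ p i)) * (Real.log (lam0 m s ρ x) + 1)) (ρ p) := by
    have h := hasDerivAt_mul_log (hasDerivAt_lam0_update s ρ x p)
      (by rw [hupd]; exact (lam0_pos hs0 hs1 hx ρ).ne')
    rwa [hupd] at h
  have hi : ∀ i : Fin m, HasDerivAt
      (fun r => lam m s (Function.update ρ p r) x i * Real.log (lam m s (Function.update ρ p r) x i))
      (lamd m s ρ p i * (Real.log (lam m s ρ x i) + 1)) (ρ p) := by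
    intro i
    have h := hasDerivAt_mul_log (hasDerivAt_lam_update s ρ x p i)
      (by rw [hupd]; exact (lam_pos hs0 hs1 hx ρ i).ne')
    rwa [hupd] at h
  have hlin : ∀ i : Fin m, HasDerivAt
      (fun r => (Function.update ρ p r i) * lam m s (Function.update ρ p r) x i)
      ((if i = p then lam m s ρ x p else 0) + ρ i * lamd m s ρ p i) (ρ p) := by
    intro i
    by_cases hip : i = p
    · subst hip
      have h := (hasDerivAt_id (ρ i)).fun_mul (hasDerivAt_lam_update s ρ x i i)
      rw [hupd] at h
      have hfun : (fun r => Function.update ρ i r i * lam m s (Function.update ρ i r) x i)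
          = fun y => id y * lam m s (Function.update ρ i y) x i := by
        funext r; rw [Function.update_self, id_eq]
      rw [if_pos rfl, hfun]
      refine h.congr_deriv (Eq.symm ?_)
      simp only [id_eq, one_mul]
    · have h := (hasDerivAt_lam_update s ρ x p i).const_mul (ρ i)
      simp only [Function.update_of_ne hip, if_neg hip]
      refine h.congr_deriv (Eq.symm ?_)
      ring
  have hsum := HasDerivAt.fun_sum (fun i (_ : i ∈ Finset.univ) => hi i)
  have hlinsum := HasDerivAt.fun_sum (fun i (_ : i ∈ Finset.univ) => hlin i)
  have hmain := (hlogE.fun_add (h0.fun_add hsum)).fun_sub hlinsum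
  have heq : (fun r => Real.log (Efun m (Function.update ρ p r))
      + (lam0 m s (Function.update ρ p r) x * Real.log (lam0 m s (Function.update ρ p r) x)
        + ∑ i, lam m s (Function.update ρ p r) x i * Real.log (lam m s (Function.update ρ p r) x i))
      - ∑ i, (Function.update ρ p r i) * lam m s (Function.update ρ p r) x i)
      = (fun r => Bfun m s (Function.update ρ p r) x) := by
    funext r; rw [Bfun_eq]
  rw [heq] at hmain
  refine hmain.congr_deriv (Eq.symm ?_)
  unfold G1
  rw [Finset.sum_add_distrib, Finset.sum_ite_eq' Finset.univ p (fun _ => lam m s ρ x p)]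
  simp

end derivB

section derivG1
variable {m : ℕ} {s : ℝ} {x : Fin m → ℝ}

lemma pderivR_Bfun (hs0 : 0 ≤ s) (hs1 : s < 1) (hx : x ∈ simplex m)
    (ρ : Fin m → ℝ) (p : Fin m) :
    pderivR m p (fun ρ' => Bfun m s ρ' x) ρ = G1 m s ρ x p :=
  (hasDerivAt_Bfun_update hs0 hs1 hx ρ p).deriv

lemma hasDerivAt_Dmu_update (ρ : Fin m → ℝ) (q p i : Fin m) :
    HasDerivAt (fun r => Dmu m (Function.update ρ q r) p i)
      ((if i = p then Dmu m ρ q p else 0)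
        - (Dmu m ρ q i * mu m ρ p + mu m ρ i * Dmu m ρ q p)) (ρ q) := by
  have hmul := (hasDerivAt_mu_update ρ q i).mul (hasDerivAt_mu_update ρ q p)
  rw [Function.update_eq_self] at hmul
  by_cases hip : i = p
  · subst hip
    have h := (hasDerivAt_mu_update ρ q i).sub hmul
    have hfun : (fun r => Dmu m (Function.update ρ q r) i i)
        = fun r => mu m (Function.update ρ q r) i - mu m (Function.update ρ q r) i * mu m (Function.update ρ q r) i := by
      funext r; simp [Dmu]
    rw [hfun, if_pos rfl]
    exact h
  · have h := (hasDerivAt_const (ρ q) (0:ℝ)).sub hmul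
    have hfun : (fun r => Dmu m (Function.update ρ q r) p i)
        = fun r => (0:ℝ) - mu m (Function.update ρ q r) i * mu m (Function.update ρ q r) p := by
      funext r; simp [Dmu, if_neg hip]
    rw [hfun, if_neg hip]
    exact h

lemma hasDerivAt_lamd_update (s : ℝ) (ρ : Fin m → ℝ) (q p i : Fin m) :
    HasDerivAt (fun r => lamd m s (Function.update ρ q r) p i)
      (lamdd m s ρ p q i) (ρ q) := by
  have h := (hasDerivAt_Dmu_update ρ q p i).const_mul (1 - s)
  simpa [lamd, lamdd] using h

lemma hasDerivAt_G1_update (hs0 : 0 ≤ s) (hs1 : s < 1) (hx : x ∈ simplex m)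
    (ρ : Fin m → ℝ) (p q : Fin m) :
    HasDerivAt (fun r => G1 m s (Function.update ρ q r) x p) (G2 m s ρ x p q) (ρ q) := by
  have hupd : Function.update ρ q (ρ q) = ρ := Function.update_eq_self q ρ
  -- T1
  have hT1 := hasDerivAt_mu_update ρ q p
  -- sum of lamd (direction p)
  have hsumlamd : HasDerivAt (fun r => -(∑ i, lamd m s (Function.update ρ q r) p i))
      (-(∑ i, lamdd m s ρ p q i)) (ρ q) :=
    (HasDerivAt.fun_sum (fun i (_ : i ∈ Finset.univ) => hasDerivAt_lamd_update s ρ q p i)).fun_neg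
  -- log lam0 + 1
  have hlog0 : HasDerivAt (fun r => Real.log (lam0 m s (Function.update ρ q r) x) + 1)
      ((-(∑ i, lamd m s ρ q i)) / lam0 m s ρ x) (ρ q) := by
    have h := ((hasDerivAt_lam0_update s ρ x q).log
      (by rw [hupd]; exact (lam0_pos hs0 hs1 hx ρ).ne')).add_const 1
    rwa [hupd] at h
  have hT2 := hsumlamd.fun_mul hlog0
  rw [hupd] at hT2
  -- T3 terms
  have hT3 : ∀ i : Fin m, HasDerivAt
      (fun r => lamd m s (Function.update ρ q r) p i * (Real.log (lam m s (Function.update ρ q r) x i) + 1))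
      (lamdd m s ρ p q i * (Real.log (lam m s ρ x i) + 1)
        + lamd m s ρ p i * (lamd m s ρ q i / lam m s ρ x i)) (ρ q) := by
    intro i
    have hlogi : HasDerivAt (fun r => Real.log (lam m s (Function.update ρ q r) x i) + 1)
        (lamd m s ρ q i / lam m s ρ x i) (ρ q) := by
      have h := ((hasDerivAt_lam_update s ρ x q i).log
        (by rw [hupd]; exact (lam_pos hs0 hs1 hx ρ i).ne')).add_const 1
      rwa [hupd] at h
    have h := (hasDerivAt_lamd_update s ρ q p i).fun_mul hlogi
    rwa [hupd] at h
  have hT3sum := HasDerivAt.fun_sum (fun i (_ : i ∈ Finset.univ) => hT3 i)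
  -- T4
  have hT4 := hasDerivAt_lam_update s ρ x q p
  -- T5
  have hT5 : ∀ i : Fin m, HasDerivAt
      (fun r => (Function.update ρ q r i) * lamd m s (Function.update ρ q r) p i)
      ((if i = q then lamd m s ρ p q else 0) + ρ i * lamdd m s ρ p q i) (ρ q) := by
    intro i
    by_cases hiq : i = q
    · subst hiq
      have h := (hasDerivAt_id (ρ i)).fun_mul (hasDerivAt_lamd_update s ρ i p i)
      rw [hupd] at h
      have hfun : (fun r => Function.update ρ i r i * lamd m s (Function.update ρ i r) p i)
          = fun y => id y * lamd m s (Function.update ρ i y) p i := by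
        funext r; rw [Function.update_self, id_eq]
      rw [if_pos rfl, hfun]
      refine h.congr_deriv (Eq.symm ?_)
      simp only [id_eq, one_mul]
    · have h := (hasDerivAt_lamd_update s ρ q p i).const_mul (ρ i)
      simp only [Function.update_of_ne hiq, if_neg hiq]
      refine h.congr_deriv (Eq.symm ?_)
      ring
  have hT5sum := HasDerivAt.fun_sum (fun i (_ : i ∈ Finset.univ) => hT5 i)
  have hmain := (hT1.fun_add (hT2.fun_add hT3sum)).fun_sub (hT4.fun_add hT5sum)
  refine hmain.congr_deriv (Eq.symm ?_)
  simp only [G2]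
  rw [Finset.sum_add_distrib, Finset.sum_add_distrib,
    Finset.sum_ite_eq' Finset.univ q (fun _ => lamd m s ρ p q)]
  simp

end derivG1

section bounds
variable {m : ℕ} {s : ℝ} {x : Fin m → ℝ}

lemma mu_nonneg (ρ : Fin m → ℝ) (i : Fin m) : 0 ≤ mu m ρ i := (mu_pos ρ i).le

lemma abs_Dmu_le_one (ρ : Fin m → ℝ) (p i : Fin m) : |Dmu m ρ p i| ≤ 1 := by
  have h1 := mu_pos ρ i; have h2 := mu_lt_one ρ i
  have h3 := mu_pos ρ p; have h4 := mu_lt_one ρ p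
  rw [abs_le]; unfold Dmu
  by_cases hip : i = p
  · rw [if_pos hip]; subst hip; constructor <;> nlinarith
  · rw [if_neg hip]; constructor <;> nlinarith

lemma abs_Dmu_le_mu (ρ : Fin m → ℝ) (p i : Fin m) : |Dmu m ρ p i| ≤ mu m ρ i := by
  have h1 := mu_pos ρ i; have h2 := mu_lt_one ρ i
  have h3 := mu_pos ρ p; have h4 := mu_lt_one ρ p
  rw [abs_le]; unfold Dmu
  by_cases hip : i = p
  · rw [if_pos hip]; subst hip; constructor <;> nlinarith
  · rw [if_neg hip]; constructor <;> nlinarith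

lemma abs_lamd_le (hs1 : s ≤ 1) (ρ : Fin m → ℝ) (p i : Fin m) :
    |lamd m s ρ p i| ≤ 1 - s := by
  unfold lamd
  rw [abs_mul, abs_of_nonneg (by linarith : (0:ℝ) ≤ 1 - s)]
  calc (1 - s) * |Dmu m ρ p i| ≤ (1 - s) * 1 :=
        mul_le_mul_of_nonneg_left (abs_Dmu_le_one ρ p i) (by linarith)
    _ = 1 - s := mul_one _

lemma abs_lamdd_le (hs1 : s ≤ 1) (ρ : Fin m → ℝ) (p q i : Fin m) :
    |lamdd m s ρ p q i| ≤ 3 * (1 - s) := by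
  unfold lamdd
  rw [abs_mul, abs_of_nonneg (by linarith : (0:ℝ) ≤ 1 - s)]
  have h1 : |(if i = p then Dmu m ρ q p else 0) - (Dmu m ρ q i * mu m ρ p + mu m ρ i * Dmu m ρ q p)| ≤ 3 := by
    have a1 : |(if i = p then Dmu m ρ q p else 0)| ≤ 1 := by
      by_cases hip : i = p
      · simp only [if_pos hip]; exact abs_Dmu_le_one ρ q p
      · simp [if_neg hip]
    have a2 : |Dmu m ρ q i * mu m ρ p| ≤ 1 := by
      rw [abs_mul]
      have := abs_Dmu_le_one ρ q i
      have h := (mu_lt_one ρ p).le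
      have h2 := mu_nonneg ρ p
      calc |Dmu m ρ q i| * |mu m ρ p| ≤ 1 * 1 := by
            apply mul_le_mul this (by rwa [abs_of_nonneg h2]) (abs_nonneg _) zero_le_one
        _ = 1 := one_mul 1
    have a3 : |mu m ρ i * Dmu m ρ q p| ≤ 1 := by
      rw [abs_mul]
      have := abs_Dmu_le_one ρ q p
      have h := (mu_lt_one ρ i).le
      have h2 := mu_nonneg ρ i
      calc |mu m ρ i| * |Dmu m ρ q p| ≤ 1 * 1 := by
            apply mul_le_mul (by rwa [abs_of_nonneg h2]) this (abs_nonneg _) zero_le_one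
        _ = 1 := one_mul 1
    calc |(if i = p then Dmu m ρ q p else 0) - (Dmu m ρ q i * mu m ρ p + mu m ρ i * Dmu m ρ q p)|
        ≤ |(if i = p then Dmu m ρ q p else 0)| + |Dmu m ρ q i * mu m ρ p + mu m ρ i * Dmu m ρ q p| :=
          abs_sub _ _
      _ ≤ 1 + (|Dmu m ρ q i * mu m ρ p| + |mu m ρ i * Dmu m ρ q p|) :=
          add_le_add a1 (abs_add_le _ _)
      _ ≤ 3 := by linarith
  calc (1 - s) * |_| ≤ (1 - s) * 3 := mul_le_mul_of_nonneg_left h1 (by linarith)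
    _ = 3 * (1 - s) := by ring

lemma one_sub_sum_mu (ρ : Fin m → ℝ) : 1 - ∑ i, mu m ρ i = 1 / Efun m ρ := by
  have hE := Efun_pos ρ
  have : ∑ i, mu m ρ i = (∑ j, Real.exp (ρ j)) / Efun m ρ := by
    simp [mu, Efun, Finset.sum_div]
  rw [this]
  field_simp [Efun]
  simp [Efun]

lemma abs_log_lam_le (hs0 : 0 ≤ s) (hs1 : s < 1) (hx : x ∈ simplex m)
    (ρ : Fin m → ℝ) (i : Fin m) :
    |Real.log (lam m s ρ x i)| ≤ -Real.log (1 - s) - Real.log (mu m ρ i) := by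
  have hpos := lam_pos hs0 hs1 hx ρ i
  have hle := lam_le_one hs0 hs1 hx ρ i
  have hup : Real.log (lam m s ρ x i) ≤ 0 := Real.log_nonpos hpos.le hle
  have hlow : Real.log (1 - s) + Real.log (mu m ρ i) ≤ Real.log (lam m s ρ x i) := by
    rw [← Real.log_mul (by linarith) (mu_pos ρ i).ne']
    apply Real.log_le_log (by nlinarith [mu_pos ρ i])
    have : 0 ≤ s * x i := mul_nonneg hs0 (hx.1 i)
    unfold lam; linarith
  rw [abs_of_nonpos hup]; linarith

lemma abs_log_lam0_le (hs0 : 0 ≤ s) (hs1 : s < 1) (hx : x ∈ simplex m)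
    (ρ : Fin m → ℝ) :
    |Real.log (lam0 m s ρ x)| ≤ -Real.log (1 - s) + Real.log (Efun m ρ) := by
  have hpos := lam0_pos hs0 hs1 hx ρ
  have hle := lam0_le_one hs0 hs1 hx ρ
  have hup : Real.log (lam0 m s ρ x) ≤ 0 := Real.log_nonpos hpos.le hle
  have hmu := sum_mu_lt_one ρ
  have hE := Efun_pos ρ
  have hlow : Real.log (1 - s) + Real.log (1 / Efun m ρ) ≤ Real.log (lam0 m s ρ x) := by
    rw [← Real.log_mul (by linarith) (by positivity)]
    apply Real.log_le_log (mul_pos (by linarith) (by positivity))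
    rw [lam0_eq, ← one_sub_sum_mu ρ]
    have : 0 ≤ s * (1 - ∑ i, x i) := mul_nonneg hs0 (by linarith [hx.2])
    linarith
  rw [abs_of_nonpos hup]
  rw [Real.log_div one_ne_zero hE.ne', Real.log_one] at hlow
  linarith

lemma sum_Dmu (ρ : Fin m → ℝ) (q : Fin m) :
    ∑ i, Dmu m ρ q i = mu m ρ q * (1 - ∑ i, mu m ρ i) := by
  unfold Dmu
  rw [Finset.sum_sub_distrib, Finset.sum_ite_eq' Finset.univ q (fun _ => mu m ρ q),
    ← Finset.sum_mul]
  simp; ring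

lemma abs_sum_lamd_le (hs1 : s ≤ 1) (ρ : Fin m → ℝ) (p : Fin m) :
    |∑ i, lamd m s ρ p i| ≤ m * (1 - s) := by
  calc |∑ i, lamd m s ρ p i| ≤ ∑ i, |lamd m s ρ p i| := Finset.abs_sum_le_sum_abs _ _
    _ ≤ ∑ _i : Fin m, (1 - s) := Finset.sum_le_sum fun i _ => abs_lamd_le hs1 ρ p i
    _ = m * (1 - s) := by simp [Finset.sum_const, Finset.card_univ, nsmul_eq_mul]; ring

lemma abs_sum_lamdd_le (hs1 : s ≤ 1) (ρ : Fin m → ℝ) (p q : Fin m) :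
    |∑ i, lamdd m s ρ p q i| ≤ m * (3 * (1 - s)) := by
  calc |∑ i, lamdd m s ρ p q i| ≤ ∑ i, |lamdd m s ρ p q i| := Finset.abs_sum_le_sum_abs _ _
    _ ≤ ∑ _i : Fin m, (3 * (1 - s)) := Finset.sum_le_sum fun i _ => abs_lamdd_le hs1 ρ p q i
    _ = m * (3 * (1 - s)) := by simp [Finset.sum_const, Finset.card_univ, nsmul_eq_mul]

lemma abs_sum_lamd_div_lam0_le (hs0 : 0 ≤ s) (hs1 : s < 1) (hx : x ∈ simplex m)
    (ρ : Fin m → ℝ) (q : Fin m) :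
    |(-(∑ i, lamd m s ρ q i)) / lam0 m s ρ x| ≤ 1 := by
  have hpos := lam0_pos hs0 hs1 hx ρ
  rw [abs_div, abs_neg, div_le_one (by rwa [abs_of_pos hpos])]
  rw [abs_of_pos hpos]
  unfold lamd
  rw [← Finset.mul_sum, sum_Dmu, abs_mul, abs_mul]
  have h1 := mu_pos ρ q; have h2 := mu_lt_one ρ q
  have h3 := sum_mu_lt_one ρ
  have h4 : 0 < 1 - ∑ i, mu m ρ i := by linarith
  rw [abs_of_nonneg (by linarith : (0:ℝ) ≤ 1 - s), abs_of_pos h1, abs_of_pos h4]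
  rw [lam0_eq]
  have h5 : 0 ≤ s * (1 - ∑ i, x i) := mul_nonneg hs0 (by linarith [hx.2])
  have h6 : mu m ρ q * (1 - ∑ i, mu m ρ i) ≤ 1 - ∑ i, mu m ρ i :=
    mul_le_of_le_one_left h4.le h2.le
  have h7 : (1 - s) * (mu m ρ q * (1 - ∑ i, mu m ρ i)) ≤ (1 - s) * (1 - ∑ i, mu m ρ i) :=
    mul_le_mul_of_nonneg_left h6 (by linarith)
  linarith

lemma abs_lamd_div_lam_le (hs0 : 0 ≤ s) (hs1 : s < 1) (hx : x ∈ simplex m)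
    (ρ : Fin m → ℝ) (q i : Fin m) :
    |lamd m s ρ q i / lam m s ρ x i| ≤ 1 := by
  have hpos := lam_pos hs0 hs1 hx ρ i
  rw [abs_div, div_le_one (by rwa [abs_of_pos hpos]), abs_of_pos hpos]
  unfold lamd
  rw [abs_mul, abs_of_nonneg (by linarith : (0:ℝ) ≤ 1 - s)]
  have h := abs_Dmu_le_mu ρ q i
  have h2 : 0 ≤ s * x i := mul_nonneg hs0 (hx.1 i)
  have h3 := mu_pos ρ i
  calc (1 - s) * |Dmu m ρ q i| ≤ (1 - s) * mu m ρ i :=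
        mul_le_mul_of_nonneg_left h (by linarith)
    _ ≤ lam m s ρ x i := by unfold lam; linarith

end bounds

section limits
variable {m : ℕ}

def Lfil (m : ℕ) (ρt xt : Fin m → ℝ) : Filter (ℝ × (Fin m → ℝ) × (Fin m → ℝ)) :=
  nhdsWithin (1, ρt, xt)
    (Set.Ioo (0 : ℝ) 1 ×ˢ ((Set.univ : Set (Fin m → ℝ)) ×ˢ frontier (simplex m)))

lemma ev_mem (ρt xt : Fin m → ℝ) :
    ∀ᶠ w in Lfil m ρt xt, (0 < w.1 ∧ w.1 < 1) ∧ w.2.2 ∈ simplex m := by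
  filter_upwards [self_mem_nhdsWithin] with w hw
  exact ⟨⟨hw.1.1, hw.1.2⟩, frontier_subset_simplex hw.2.2⟩

lemma continuous_mu_i (i : Fin m) : Continuous fun ρ : Fin m → ℝ => mu m ρ i := by
  apply Continuous.div
  · exact Real.continuous_exp.comp (continuous_apply i)
  · exact continuous_const.add
      (continuous_finset_sum _ fun j _ => Real.continuous_exp.comp (continuous_apply j))
  · intro ρ
    have := Efun_pos ρ
    simp only [Efun] at this
    exact this.ne'

lemma continuous_Efun : Continuous fun ρ : Fin m → ℝ => Efun m ρ := by
  unfold Efun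
  exact continuous_const.add
    (continuous_finset_sum _ fun j _ => Real.continuous_exp.comp (continuous_apply j))

lemma continuous_Dmu_i (p i : Fin m) : Continuous fun ρ : Fin m → ℝ => Dmu m ρ p i := by
  unfold Dmu
  apply Continuous.sub
  · by_cases hip : i = p <;> simp only [if_pos, if_neg, hip] <;>
      first
        | exact continuous_mu_i p
        | exact continuous_const
  · exact (continuous_mu_i i).mul (continuous_mu_i p)

lemma tendsto_one_sub (ρt xt : Fin m → ℝ) :
    Tendsto (fun w : ℝ × (Fin m → ℝ) × (Fin m → ℝ) => 1 - w.1) (Lfil m ρt xt) (𝓝[>] 0) := by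
  refine tendsto_nhdsWithin_iff.mpr ⟨?_, ?_⟩
  · have h : Tendsto (fun w : ℝ × (Fin m → ℝ) × (Fin m → ℝ) => 1 - w.1)
        (𝓝 ((1 : ℝ), ρt, xt)) (𝓝 (1 - (1 : ℝ))) :=
      (continuous_const.sub continuous_fst).tendsto _
    simpa [Lfil] using h.mono_left nhdsWithin_le_nhds
  · filter_upwards [ev_mem ρt xt] with w hw
    simpa using sub_pos.mpr hw.1.2

lemma tendsto_snd_cont (ρt xt : Fin m → ℝ) {g : (Fin m → ℝ) → ℝ} (hg : Continuous g) :
    Tendsto (fun w : ℝ × (Fin m → ℝ) × (Fin m → ℝ) => g w.2.1) (Lfil m ρt xt) (𝓝 (g ρt)) :=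
  ((hg.comp (continuous_fst.comp continuous_snd)).tendsto _).mono_left nhdsWithin_le_nhds

lemma tendsto_aux (ρt xt : Fin m → ℝ) {c : ℝ} {C : (Fin m → ℝ) → ℝ} (hC : Continuous C)
    {f : ℝ × (Fin m → ℝ) × (Fin m → ℝ) → ℝ}
    (hf : ∀ᶠ w in Lfil m ρt xt,
      |f w| ≤ (1 - w.1) * (-Real.log (1 - w.1)) * c + (1 - w.1) * C w.2.1) :
    Tendsto f (Lfil m ρt xt) (𝓝 0) := by
  apply squeeze_zero_norm'
    (a := fun w => (1 - w.1) * (-Real.log (1 - w.1)) * c + (1 - w.1) * C w.2.1)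
    (hf.mono fun w h => by rwa [Real.norm_eq_abs])
  have h1 : Tendsto (fun w : ℝ × (Fin m → ℝ) × (Fin m → ℝ) =>
      (1 - w.1) * (-Real.log (1 - w.1)) * c) (Lfil m ρt xt) (𝓝 0) := by
    have h := (tendsto_log_mul_rpow_nhdsGT_zero one_pos).comp (tendsto_one_sub ρt xt)
    have h2 := h.neg.mul_const c
    simp only [Function.comp, neg_zero, zero_mul] at h2
    refine Tendsto.congr (fun w => ?_) h2
    rw [Real.rpow_one]; ring
  have h2 : Tendsto (fun w : ℝ × (Fin m → ℝ) × (Fin m → ℝ) => (1 - w.1) * C w.2.1)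
      (Lfil m ρt xt) (𝓝 0) := by
    have ha := (tendsto_one_sub ρt xt).mono_right nhdsWithin_le_nhds
    have hb := tendsto_snd_cont ρt xt hC
    simpa using ha.mul hb
  simpa using h1.add h2

lemma tendsto_lam_comp (ρt xt : Fin m → ℝ) (i : Fin m) :
    Tendsto (fun w : ℝ × (Fin m → ℝ) × (Fin m → ℝ) => lam m w.1 w.2.1 w.2.2 i)
      (Lfil m ρt xt) (𝓝 (xt i)) := by
  have t1 := (tendsto_one_sub ρt xt).mono_right nhdsWithin_le_nhds
  have t2 := tendsto_snd_cont ρt xt (continuous_mu_i i)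
  have t3 : Tendsto (fun w : ℝ × (Fin m → ℝ) × (Fin m → ℝ) => w.1) (Lfil m ρt xt) (𝓝 1) :=
    (continuous_fst.tendsto _).mono_left nhdsWithin_le_nhds
  have t4 : Tendsto (fun w : ℝ × (Fin m → ℝ) × (Fin m → ℝ) => w.2.2 i)
      (Lfil m ρt xt) (𝓝 (xt i)) :=
    (((continuous_apply i).comp (continuous_snd.comp continuous_snd)).tendsto _).mono_left
      nhdsWithin_le_nhds
  have h := (t1.mul t2).add (t3.mul t4)
  simp only [zero_mul, one_mul, zero_add] at h
  exact h

end limits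

section errterms
variable {m : ℕ} (ρt xt : Fin m → ℝ) (p q : Fin m)

lemma he1 : Tendsto (fun w : ℝ × (Fin m → ℝ) × (Fin m → ℝ) =>
    (-(∑ i, lamd m w.1 w.2.1 p i)) * (Real.log (lam0 m w.1 w.2.1 w.2.2) + 1))
    (Lfil m ρt xt) (𝓝 0) := by
  apply tendsto_aux ρt xt (c := (m : ℝ))
    (C := fun ρ => m * (Real.log (Efun m ρ) + 1))
    (continuous_const.mul ((continuous_Efun.log fun ρ => (Efun_pos ρ).ne').add continuous_const))
  filter_upwards [ev_mem ρt xt] with w hw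
  obtain ⟨⟨h0, h1⟩, hx⟩ := hw
  have b1 := abs_sum_lamd_le (m := m) h1.le w.2.1 p
  have b2 := abs_log_lam0_le (m := m) h0.le h1 hx w.2.1
  have hlog : 0 ≤ -Real.log (1 - w.1) := by
    rw [neg_nonneg]
    exact Real.log_nonpos (by linarith) (by linarith)
  calc |(-(∑ i, lamd m w.1 w.2.1 p i)) * (Real.log (lam0 m w.1 w.2.1 w.2.2) + 1)|
      = |∑ i, lamd m w.1 w.2.1 p i| * |Real.log (lam0 m w.1 w.2.1 w.2.2) + 1| := by
        rw [abs_mul, abs_neg]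
    _ ≤ (m * (1 - w.1)) * ((-Real.log (1 - w.1) + Real.log (Efun m w.2.1)) + 1) := by
        apply mul_le_mul b1 ?_ (abs_nonneg _)
          (mul_nonneg (Nat.cast_nonneg m) (by linarith))
        calc |Real.log (lam0 m w.1 w.2.1 w.2.2) + 1|
            ≤ |Real.log (lam0 m w.1 w.2.1 w.2.2)| + 1 := by
              simpa using abs_add_le (Real.log (lam0 m w.1 w.2.1 w.2.2)) 1
          _ ≤ (-Real.log (1 - w.1) + Real.log (Efun m w.2.1)) + 1 := by linarith
    _ = (1 - w.1) * (-Real.log (1 - w.1)) * m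
        + (1 - w.1) * (m * (Real.log (Efun m w.2.1) + 1)) := by ring

lemma he2 : Tendsto (fun w : ℝ × (Fin m → ℝ) × (Fin m → ℝ) =>
    ∑ i, lamd m w.1 w.2.1 p i * (Real.log (lam m w.1 w.2.1 w.2.2 i) + 1))
    (Lfil m ρt xt) (𝓝 0) := by
  apply tendsto_aux ρt xt (c := (m : ℝ))
    (C := fun ρ => ∑ i, (1 - Real.log (mu m ρ i)))
    (continuous_finset_sum _ fun i _ =>
      continuous_const.sub ((continuous_mu_i i).log fun ρ => (mu_pos ρ i).ne'))
  filter_upwards [ev_mem ρt xt] with w hw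
  obtain ⟨⟨h0, h1⟩, hx⟩ := hw
  calc |∑ i, lamd m w.1 w.2.1 p i * (Real.log (lam m w.1 w.2.1 w.2.2 i) + 1)|
      ≤ ∑ i, |lamd m w.1 w.2.1 p i * (Real.log (lam m w.1 w.2.1 w.2.2 i) + 1)| :=
        Finset.abs_sum_le_sum_abs _ _
    _ ≤ ∑ i, ((1 - w.1) * (-Real.log (1 - w.1))
          + (1 - w.1) * (1 - Real.log (mu m w.2.1 i))) := by
        apply Finset.sum_le_sum
        intro i _
        rw [abs_mul]
        have b1 := abs_lamd_le (m := m) h1.le w.2.1 p i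
        have b2 := abs_log_lam_le (m := m) h0.le h1 hx w.2.1 i
        have b3 : |Real.log (lam m w.1 w.2.1 w.2.2 i) + 1|
            ≤ (-Real.log (1 - w.1) - Real.log (mu m w.2.1 i)) + 1 := by
          calc |Real.log (lam m w.1 w.2.1 w.2.2 i) + 1|
              ≤ |Real.log (lam m w.1 w.2.1 w.2.2 i)| + 1 := by
                simpa using abs_add_le (Real.log (lam m w.1 w.2.1 w.2.2 i)) 1
            _ ≤ _ := by linarith
        calc |lamd m w.1 w.2.1 p i| * |Real.log (lam m w.1 w.2.1 w.2.2 i) + 1|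
            ≤ (1 - w.1) * ((-Real.log (1 - w.1) - Real.log (mu m w.2.1 i)) + 1) :=
              mul_le_mul b1 b3 (abs_nonneg _) (by linarith)
          _ = (1 - w.1) * (-Real.log (1 - w.1))
              + (1 - w.1) * (1 - Real.log (mu m w.2.1 i)) := by ring
    _ = (1 - w.1) * (-Real.log (1 - w.1)) * m
        + (1 - w.1) * ∑ i, (1 - Real.log (mu m w.2.1 i)) := by
        rw [Finset.sum_add_distrib, Finset.sum_const, Finset.card_univ, ← Finset.mul_sum]
        simp [nsmul_eq_mul]
        ring

lemma he3 : Tendsto (fun w : ℝ × (Fin m → ℝ) × (Fin m → ℝ) =>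
    ∑ i, w.2.1 i * lamd m w.1 w.2.1 p i) (Lfil m ρt xt) (𝓝 0) := by
  apply tendsto_aux ρt xt (c := (0 : ℝ))
    (C := fun ρ => ∑ i, |ρ i|)
    (continuous_finset_sum _ fun i _ => (continuous_apply i).abs)
  filter_upwards [ev_mem ρt xt] with w hw
  obtain ⟨⟨h0, h1⟩, hx⟩ := hw
  calc |∑ i, w.2.1 i * lamd m w.1 w.2.1 p i|
      ≤ ∑ i, |w.2.1 i * lamd m w.1 w.2.1 p i| := Finset.abs_sum_le_sum_abs _ _
    _ ≤ ∑ i, |w.2.1 i| * (1 - w.1) := by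
        apply Finset.sum_le_sum
        intro i _
        rw [abs_mul]
        exact mul_le_mul_of_nonneg_left (abs_lamd_le h1.le w.2.1 p i) (abs_nonneg _)
    _ = (1 - w.1) * (-Real.log (1 - w.1)) * 0 + (1 - w.1) * ∑ i, |w.2.1 i| := by
        rw [← Finset.sum_mul]
        ring

end errterms

section errterms2
variable {m : ℕ} (ρt xt : Fin m → ℝ) (p q : Fin m)

lemma tendsto_G1 : Tendsto (fun w : ℝ × (Fin m → ℝ) × (Fin m → ℝ) =>
    G1 m w.1 w.2.1 w.2.2 p) (Lfil m ρt xt) (𝓝 (-(xt p - mu m ρt p))) := by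
  have hval : -(xt p - mu m ρt p) = mu m ρt p + (0 + 0) - (xt p + 0) := by ring
  rw [hval]
  simp only [G1]
  exact ((tendsto_snd_cont ρt xt (continuous_mu_i p)).add
    ((he1 ρt xt p).add (he2 ρt xt p))).sub ((tendsto_lam_comp ρt xt p).add (he3 ρt xt p))

lemma hE1 : Tendsto (fun w : ℝ × (Fin m → ℝ) × (Fin m → ℝ) =>
    (-(∑ i, lamdd m w.1 w.2.1 p q i)) * (Real.log (lam0 m w.1 w.2.1 w.2.2) + 1))
    (Lfil m ρt xt) (𝓝 0) := by
  apply tendsto_aux ρt xt (c := 3 * (m : ℝ))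
    (C := fun ρ => 3 * m * (Real.log (Efun m ρ) + 1))
    (continuous_const.mul ((continuous_Efun.log fun ρ => (Efun_pos ρ).ne').add continuous_const))
  filter_upwards [ev_mem ρt xt] with w hw
  obtain ⟨⟨h0, h1⟩, hx⟩ := hw
  have b1 := abs_sum_lamdd_le (m := m) h1.le w.2.1 p q
  have b2 := abs_log_lam0_le (m := m) h0.le h1 hx w.2.1
  calc |(-(∑ i, lamdd m w.1 w.2.1 p q i)) * (Real.log (lam0 m w.1 w.2.1 w.2.2) + 1)|
      = |∑ i, lamdd m w.1 w.2.1 p q i| * |Real.log (lam0 m w.1 w.2.1 w.2.2) + 1| := by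
        rw [abs_mul, abs_neg]
    _ ≤ (m * (3 * (1 - w.1))) * ((-Real.log (1 - w.1) + Real.log (Efun m w.2.1)) + 1) := by
        apply mul_le_mul b1 ?_ (abs_nonneg _)
          (mul_nonneg (Nat.cast_nonneg m) (by linarith))
        calc |Real.log (lam0 m w.1 w.2.1 w.2.2) + 1|
            ≤ |Real.log (lam0 m w.1 w.2.1 w.2.2)| + 1 := by
              simpa using abs_add_le (Real.log (lam0 m w.1 w.2.1 w.2.2)) 1
          _ ≤ _ := by linarith
    _ = (1 - w.1) * (-Real.log (1 - w.1)) * (3 * m)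
        + (1 - w.1) * (3 * m * (Real.log (Efun m w.2.1) + 1)) := by ring

lemma hE2 : Tendsto (fun w : ℝ × (Fin m → ℝ) × (Fin m → ℝ) =>
    (-(∑ i, lamd m w.1 w.2.1 p i)) * ((-(∑ i, lamd m w.1 w.2.1 q i)) / lam0 m w.1 w.2.1 w.2.2))
    (Lfil m ρt xt) (𝓝 0) := by
  apply tendsto_aux ρt xt (c := (0 : ℝ)) (C := fun _ => (m : ℝ)) continuous_const
  filter_upwards [ev_mem ρt xt] with w hw
  obtain ⟨⟨h0, h1⟩, hx⟩ := hw
  have b1 := abs_sum_lamd_le (m := m) h1.le w.2.1 p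
  have b2 := abs_sum_lamd_div_lam0_le (m := m) h0.le h1 hx w.2.1 q
  calc |(-(∑ i, lamd m w.1 w.2.1 p i))
        * ((-(∑ i, lamd m w.1 w.2.1 q i)) / lam0 m w.1 w.2.1 w.2.2)|
      = |∑ i, lamd m w.1 w.2.1 p i|
        * |(-(∑ i, lamd m w.1 w.2.1 q i)) / lam0 m w.1 w.2.1 w.2.2| := by
        rw [abs_mul, abs_neg]
    _ ≤ (m * (1 - w.1)) * 1 := by
        apply mul_le_mul b1 b2 (abs_nonneg _) (mul_nonneg (Nat.cast_nonneg m) (by linarith))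
    _ = (1 - w.1) * (-Real.log (1 - w.1)) * 0 + (1 - w.1) * m := by ring

lemma hE34 : Tendsto (fun w : ℝ × (Fin m → ℝ) × (Fin m → ℝ) =>
    ∑ i, (lamdd m w.1 w.2.1 p q i * (Real.log (lam m w.1 w.2.1 w.2.2 i) + 1)
      + lamd m w.1 w.2.1 p i * (lamd m w.1 w.2.1 q i / lam m w.1 w.2.1 w.2.2 i)))
    (Lfil m ρt xt) (𝓝 0) := by
  apply tendsto_aux ρt xt (c := 3 * (m : ℝ))
    (C := fun ρ => ∑ i, (3 * (1 - Real.log (mu m ρ i)) + 1))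
    (continuous_finset_sum _ fun i _ =>
      (continuous_const.mul
        (continuous_const.sub ((continuous_mu_i i).log fun ρ => (mu_pos ρ i).ne'))).add
        continuous_const)
  filter_upwards [ev_mem ρt xt] with w hw
  obtain ⟨⟨h0, h1⟩, hx⟩ := hw
  calc |∑ i, (lamdd m w.1 w.2.1 p q i * (Real.log (lam m w.1 w.2.1 w.2.2 i) + 1)
        + lamd m w.1 w.2.1 p i * (lamd m w.1 w.2.1 q i / lam m w.1 w.2.1 w.2.2 i))|
      ≤ ∑ i, |lamdd m w.1 w.2.1 p q i * (Real.log (lam m w.1 w.2.1 w.2.2 i) + 1)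
        + lamd m w.1 w.2.1 p i * (lamd m w.1 w.2.1 q i / lam m w.1 w.2.1 w.2.2 i)| :=
        Finset.abs_sum_le_sum_abs _ _
    _ ≤ ∑ i, ((1 - w.1) * (-Real.log (1 - w.1)) * 3
          + (1 - w.1) * (3 * (1 - Real.log (mu m w.2.1 i)) + 1)) := by
        apply Finset.sum_le_sum
        intro i _
        have b1 := abs_lamdd_le (m := m) h1.le w.2.1 p q i
        have b2 := abs_log_lam_le (m := m) h0.le h1 hx w.2.1 i
        have b3 := abs_lamd_le (m := m) h1.le w.2.1 p i
        have b4 := abs_lamd_div_lam_le (m := m) h0.le h1 hx w.2.1 q i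
        have c1 : |lamdd m w.1 w.2.1 p q i * (Real.log (lam m w.1 w.2.1 w.2.2 i) + 1)|
            ≤ (3 * (1 - w.1)) * ((-Real.log (1 - w.1) - Real.log (mu m w.2.1 i)) + 1) := by
          rw [abs_mul]
          apply mul_le_mul b1 ?_ (abs_nonneg _) (by linarith)
          calc |Real.log (lam m w.1 w.2.1 w.2.2 i) + 1|
              ≤ |Real.log (lam m w.1 w.2.1 w.2.2 i)| + 1 := by
                simpa using abs_add_le (Real.log (lam m w.1 w.2.1 w.2.2 i)) 1
            _ ≤ _ := by linarith
        have c2 : |lamd m w.1 w.2.1 p i * (lamd m w.1 w.2.1 q i / lam m w.1 w.2.1 w.2.2 i)|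
            ≤ (1 - w.1) * 1 := by
          rw [abs_mul]
          exact mul_le_mul b3 b4 (abs_nonneg _) (by linarith)
        calc |lamdd m w.1 w.2.1 p q i * (Real.log (lam m w.1 w.2.1 w.2.2 i) + 1)
              + lamd m w.1 w.2.1 p i * (lamd m w.1 w.2.1 q i / lam m w.1 w.2.1 w.2.2 i)|
            ≤ |lamdd m w.1 w.2.1 p q i * (Real.log (lam m w.1 w.2.1 w.2.2 i) + 1)|
              + |lamd m w.1 w.2.1 p i * (lamd m w.1 w.2.1 q i / lam m w.1 w.2.1 w.2.2 i)| :=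
              abs_add_le _ _
          _ ≤ (3 * (1 - w.1)) * ((-Real.log (1 - w.1) - Real.log (mu m w.2.1 i)) + 1)
              + (1 - w.1) * 1 := add_le_add c1 c2
          _ = (1 - w.1) * (-Real.log (1 - w.1)) * 3
              + (1 - w.1) * (3 * (1 - Real.log (mu m w.2.1 i)) + 1) := by ring
    _ = (1 - w.1) * (-Real.log (1 - w.1)) * (3 * m)
        + (1 - w.1) * ∑ i, (3 * (1 - Real.log (mu m w.2.1 i)) + 1) := by
        rw [Finset.sum_add_distrib, Finset.sum_const, Finset.card_univ, ← Finset.mul_sum]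
        simp [nsmul_eq_mul]
        ring

lemma hE5 : Tendsto (fun w : ℝ × (Fin m → ℝ) × (Fin m → ℝ) =>
    lamd m w.1 w.2.1 p q) (Lfil m ρt xt) (𝓝 0) := by
  apply tendsto_aux ρt xt (c := (0 : ℝ)) (C := fun _ => (1 : ℝ)) continuous_const
  filter_upwards [ev_mem ρt xt] with w hw
  obtain ⟨⟨h0, h1⟩, hx⟩ := hw
  have := abs_lamd_le (m := m) h1.le w.2.1 p q
  calc |lamd m w.1 w.2.1 p q| ≤ 1 - w.1 := this
    _ = (1 - w.1) * (-Real.log (1 - w.1)) * 0 + (1 - w.1) * 1 := by ring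

lemma hE7 : Tendsto (fun w : ℝ × (Fin m → ℝ) × (Fin m → ℝ) =>
    ∑ i, w.2.1 i * lamdd m w.1 w.2.1 p q i) (Lfil m ρt xt) (𝓝 0) := by
  apply tendsto_aux ρt xt (c := (0 : ℝ))
    (C := fun ρ => ∑ i, |ρ i| * 3)
    (continuous_finset_sum _ fun i _ => (continuous_apply i).abs.mul continuous_const)
  filter_upwards [ev_mem ρt xt] with w hw
  obtain ⟨⟨h0, h1⟩, hx⟩ := hw
  calc |∑ i, w.2.1 i * lamdd m w.1 w.2.1 p q i|
      ≤ ∑ i, |w.2.1 i * lamdd m w.1 w.2.1 p q i| := Finset.abs_sum_le_sum_abs _ _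
    _ ≤ ∑ i, |w.2.1 i| * (3 * (1 - w.1)) := by
        apply Finset.sum_le_sum
        intro i _
        rw [abs_mul]
        exact mul_le_mul_of_nonneg_left (abs_lamdd_le h1.le w.2.1 p q i) (abs_nonneg _)
    _ = (1 - w.1) * (-Real.log (1 - w.1)) * 0 + (1 - w.1) * ∑ i, |w.2.1 i| * 3 := by
        rw [Finset.mul_sum,
          show ((1 - w.1) * (-Real.log (1 - w.1)) * 0 : ℝ) = 0 by ring, zero_add]
        exact Finset.sum_congr rfl fun i _ => by ring

lemma tendsto_G2 : Tendsto (fun w : ℝ × (Fin m → ℝ) × (Fin m → ℝ) =>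
    G2 m w.1 w.2.1 w.2.2 p q) (Lfil m ρt xt)
    (𝓝 ((if p = q then mu m ρt p else 0) - mu m ρt p * mu m ρt q)) := by
  have hval : (if p = q then mu m ρt p else 0) - mu m ρt p * mu m ρt q
      = Dmu m ρt q p + ((0 + 0) + 0) - (0 + (0 + 0)) := by
    unfold Dmu
    by_cases h : p = q
    · subst h; simp
    · simp [if_neg h]
  rw [hval]
  simp only [G2]
  exact ((tendsto_snd_cont ρt xt (continuous_Dmu_i q p)).add
    (((hE1 ρt xt p q).add (hE2 ρt xt p q)).add (hE34 ρt xt p q))).sub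
    ((hE5 ρt xt q p).add ((hE5 ρt xt p q).add (hE7 ρt xt p q)))

end errterms2

/-- B_{ρ_p} → −(x̃_p − μ_p(ρ̃)) and B_{ρ_p ρ_q} → δ_{pq}μ_p(ρ̃) − μ_p(ρ̃)μ_q(ρ̃)
as (s,ρ,x) → (1,ρ̃,x̃) in (0,1) × ℝ^m × ∂Δ. -/
theorem B_rho_derivs_tendsto_at_one (m : ℕ) (hm : 1 ≤ m) (ρt : Fin m → ℝ)
    (xt : Fin m → ℝ) (hxt : xt ∈ frontier (simplex m)) (p q : Fin m) :
    Filter.Tendsto (fun w : ℝ × (Fin m → ℝ) × (Fin m → ℝ) =>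
        pderivR m p (fun ρ' => Bfun m w.1 ρ' w.2.2) w.2.1)
      (nhdsWithin (1, ρt, xt)
        (Set.Ioo (0 : ℝ) 1 ×ˢ ((Set.univ : Set (Fin m → ℝ)) ×ˢ frontier (simplex m))))
      (nhds (-(xt p - mu m ρt p))) ∧
    Filter.Tendsto (fun w : ℝ × (Fin m → ℝ) × (Fin m → ℝ) =>
        pderivR m q (fun ρ' => pderivR m p (fun ρ'' => Bfun m w.1 ρ'' w.2.2) ρ') w.2.1)
      (nhdsWithin (1, ρt, xt)
        (Set.Ioo (0 : ℝ) 1 ×ˢ ((Set.univ : Set (Fin m → ℝ)) ×ˢ frontier (simplex m))))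
      (nhds ((if p = q then mu m ρt p else 0) - mu m ρt p * mu m ρt q)) := by
  
  constructor
  · refine Tendsto.congr' ?_ (tendsto_G1 ρt xt p)
    filter_upwards [ev_mem ρt xt] with w hw
    exact (pderivR_Bfun hw.1.1.le hw.1.2 hw.2 w.2.1 p).symm
  · refine Tendsto.congr' ?_ (tendsto_G2 ρt xt p q)
    filter_upwards [ev_mem ρt xt] with w hw
    have hs0 := hw.1.1.le
    have hs1 := hw.1.2
    have hx := hw.2
    have hfeq : (fun ρ' => pderivR m p (fun ρ'' => Bfun m w.1 ρ'' w.2.2) ρ')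
        = fun ρ' => G1 m w.1 ρ' w.2.2 p := funext fun ρ' => pderivR_Bfun hs0 hs1 hx ρ' p
    calc G2 m w.1 w.2.1 w.2.2 p q
        = pderivR m q (fun ρ' => G1 m w.1 ρ' w.2.2 p) w.2.1 :=
          ((hasDerivAt_G1_update hs0 hs1 hx w.2.1 p q).deriv).symm
      _ = _ := by rw [hfeq]
end
end

section
/- The function h is differentiable in t and in ρ at every point of H, with ∂h/∂t (t,ρ,x) = 1 / B_s(h(t,ρ,x),ρ,x) > 0 and ∂h/∂ρ_p (t,ρ,x) = − B_{ρ_p}(h(t,ρ,x),ρ,x) / B_s(h(t,ρ,x),ρ,x) for each p ∈ {1,…,m}, and these partial derivatives are continuous on H. -/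
open MeasureTheory Real Filter Set

noncomputable section

namespace HD

variable {m : ℕ}

def lam (m : ℕ) (s : ℝ) (ρ x : Fin m → ℝ) : Fin m → ℝ :=
  fun i => (1 - s) * mu m ρ i + s * x i

lemma Bfun_eq (m : ℕ) (s : ℝ) (ρ x : Fin m → ℝ) :
    Bfun m s ρ x = bfun m (lam m s ρ x) ρ := rfl

lemma Epos (ρ : Fin m → ℝ) : 0 < 1 + ∑ i, Real.exp (ρ i) := by positivity

lemma mu_pos (ρ : Fin m → ℝ) (i : Fin m) : 0 < mu m ρ i :=
  div_pos (Real.exp_pos _) (Epos ρ)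

lemma sum_mu (ρ : Fin m → ℝ) :
    ∑ i, mu m ρ i = (∑ i, Real.exp (ρ i)) / (1 + ∑ i, Real.exp (ρ i)) := by
  simp only [mu]; rw [← Finset.sum_div]

lemma one_sub_sum_mu (ρ : Fin m → ℝ) :
    1 - ∑ i, mu m ρ i = 1 / (1 + ∑ i, Real.exp (ρ i)) := by
  rw [sum_mu]
  field_simp
  ring

lemma sum_mu_lt_one (ρ : Fin m → ℝ) : ∑ i, mu m ρ i < 1 := by
  have h := one_sub_sum_mu ρ
  have : (0:ℝ) < 1 / (1 + ∑ i, Real.exp (ρ i)) := by positivity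
  linarith

lemma simplex_isClosed : IsClosed (simplex m) := by
  have h1 : IsClosed {l : Fin m → ℝ | ∀ i, 0 ≤ l i} := by
    have : {l : Fin m → ℝ | ∀ i, 0 ≤ l i} = ⋂ i, {l | 0 ≤ l i} := by
      ext l; simp
    rw [this]
    exact isClosed_iInter fun i => isClosed_le continuous_const (continuous_apply i)
  have h2 : IsClosed {l : Fin m → ℝ | ∑ i, l i ≤ 1} :=
    isClosed_le (by continuity) continuous_const
  exact h1.inter h2

lemma mem_simplex_of_frontier {x : Fin m → ℝ} (hx : x ∈ frontier (simplex m)) :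
    x ∈ simplex m := by
  have := frontier_subset_closure hx
  rwa [simplex_isClosed.closure_eq] at this

lemma frontier_ne_mu {x : Fin m → ℝ} (hx : x ∈ frontier (simplex m)) (ρ : Fin m → ℝ) :
    ∃ i, x i ≠ mu m ρ i := by
  by_contra hc
  push_neg at hc
  have hxmu : x = mu m ρ := funext hc
  have hV : IsOpen ({l : Fin m → ℝ | ∀ i, 0 < l i} ∩ {l | ∑ i, l i < 1}) := by
    apply IsOpen.inter
    · have : {l : Fin m → ℝ | ∀ i, 0 < l i} = ⋂ i, {l | 0 < l i} := by ext l; simp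
      rw [this]
      exact isOpen_iInter_of_finite fun i => isOpen_lt continuous_const (continuous_apply i)
    · exact isOpen_lt (by continuity) continuous_const
  have hsub : ({l : Fin m → ℝ | ∀ i, 0 < l i} ∩ {l | ∑ i, l i < 1}) ⊆ simplex m :=
    fun l hl => ⟨fun i => (hl.1 i).le, hl.2.le⟩
  have hmem : x ∈ interior (simplex m) := by
    apply interior_maximal hsub hV
    rw [hxmu]
    exact ⟨fun i => mu_pos ρ i, sum_mu_lt_one ρ⟩
  rw [simplex_isClosed.frontier_eq] at hx
  exact hx.2 hmem

lemma sum_lam (m : ℕ) (s : ℝ) (ρ x : Fin m → ℝ) :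
    ∑ i, lam m s ρ x i = (1 - s) * (∑ i, mu m ρ i) + s * ∑ i, x i := by
  simp only [lam]; rw [Finset.sum_add_distrib, ← Finset.mul_sum, ← Finset.mul_sum]

lemma lam_pos {x : Fin m → ℝ} (hx : x ∈ simplex m) {s : ℝ} (hs : 0 ≤ s) (hs1 : s < 1)
    (ρ : Fin m → ℝ) (i : Fin m) : 0 < lam m s ρ x i := by
  have h1 : 0 < (1 - s) * mu m ρ i := mul_pos (by linarith) (mu_pos ρ i)
  have h2 : 0 ≤ s * x i := mul_nonneg hs (hx.1 i)
  simp only [lam]; linarith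

lemma lam0_pos {x : Fin m → ℝ} (hx : x ∈ simplex m) {s : ℝ} (hs : 0 ≤ s) (hs1 : s < 1)
    (ρ : Fin m → ℝ) : 0 < 1 - ∑ i, lam m s ρ x i := by
  rw [sum_lam]
  have h1 : 1 - ∑ i, mu m ρ i = 1 / (1 + ∑ i, Real.exp (ρ i)) := one_sub_sum_mu ρ
  have h2 : (0:ℝ) < 1 / (1 + ∑ i, Real.exp (ρ i)) := by positivity
  have h3 : ∑ i, x i ≤ 1 := hx.2
  nlinarith

end HD

namespace HD
variable {m : ℕ}

def dd (m : ℕ) (ρ x : Fin m → ℝ) : Fin m → ℝ := fun i => x i - mu m ρ i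

def Bs1 (m : ℕ) (s : ℝ) (ρ x : Fin m → ℝ) : ℝ :=
  (Real.log (1 - ∑ i, lam m s ρ x i) + 1) * (-∑ i, dd m ρ x i)
  + ∑ i, (Real.log (lam m s ρ x i) + 1) * dd m ρ x i
  - ∑ i, ρ i * dd m ρ x i

def Bs2 (m : ℕ) (s : ℝ) (ρ x : Fin m → ℝ) : ℝ :=
  (-∑ i, dd m ρ x i) / (1 - ∑ i, lam m s ρ x i) * (-∑ i, dd m ρ x i)
  + ∑ i, dd m ρ x i / lam m s ρ x i * dd m ρ x i

lemma hasDerivAt_lam (ρ x : Fin m → ℝ) (s : ℝ) (i : Fin m) :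
    HasDerivAt (fun s' => (1 - s') * mu m ρ i + s' * x i) (dd m ρ x i) s := by
  have h : HasDerivAt (fun s' : ℝ => (1 - s') * mu m ρ i + s' * x i)
      ((-1) * mu m ρ i + 1 * x i) s :=
    (((hasDerivAt_id s).const_sub 1).mul_const _).add ((hasDerivAt_id s).mul_const _)
  convert h using 1
  simp [dd]; ring

lemma hasDerivAt_sum_lam (ρ x : Fin m → ℝ) (s : ℝ) :
    HasDerivAt (fun s' => ∑ i, lam m s' ρ x i) (∑ i, dd m ρ x i) s := by
  simp only [lam]
  exact HasDerivAt.fun_sum fun i _ => hasDerivAt_lam ρ x s i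

lemma hasDerivAt_lam0 (ρ x : Fin m → ℝ) (s : ℝ) :
    HasDerivAt (fun s' => 1 - ∑ i, lam m s' ρ x i) (-∑ i, dd m ρ x i) s :=
  (hasDerivAt_sum_lam ρ x s).const_sub 1

lemma hasDerivAt_Bfun_s (ρ x : Fin m → ℝ) {s : ℝ}
    (hlam : ∀ i, lam m s ρ x i ≠ 0) (hlam0 : 1 - ∑ i, lam m s ρ x i ≠ 0) :
    HasDerivAt (fun s' => Bfun m s' ρ x) (Bs1 m s ρ x) s := by
  have hml0 : HasDerivAt (fun s' => (1 - ∑ i, lam m s' ρ x i) *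
      Real.log (1 - ∑ i, lam m s' ρ x i))
      ((Real.log (1 - ∑ i, lam m s ρ x i) + 1) * (-∑ i, dd m ρ x i)) s :=
    by have := (Real.hasDerivAt_mul_log hlam0).comp s (hasDerivAt_lam0 ρ x s); exact this
  have hmli : ∀ i : Fin m, HasDerivAt (fun s' => lam m s' ρ x i * Real.log (lam m s' ρ x i))
      ((Real.log (lam m s ρ x i) + 1) * dd m ρ x i) s := fun i => by
    have := (Real.hasDerivAt_mul_log (hlam i)).comp s
      ((hasDerivAt_lam ρ x s i) : HasDerivAt (fun s' => lam m s' ρ x i) (dd m ρ x i) s)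
    exact this
  have hsum2 : HasDerivAt (fun s' => ∑ i, lam m s' ρ x i * Real.log (lam m s' ρ x i))
      (∑ i, (Real.log (lam m s ρ x i) + 1) * dd m ρ x i) s :=
    HasDerivAt.fun_sum fun i _ => hmli i
  have hlin : HasDerivAt (fun s' => ∑ i, ρ i * lam m s' ρ x i)
      (∑ i, ρ i * dd m ρ x i) s :=
    HasDerivAt.fun_sum fun i _ => ((hasDerivAt_lam ρ x s i) :
      HasDerivAt (fun s' => lam m s' ρ x i) (dd m ρ x i) s).const_mul (ρ i)
  have htotal := (((hasDerivAt_const s (Real.log (1 + ∑ i, Real.exp (ρ i)))).fun_add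
    (hml0.fun_add hsum2)).fun_sub hlin)
  have heq : (fun s' => Real.log (1 + ∑ i, Real.exp (ρ i)) +
      ((1 - ∑ i, lam m s' ρ x i) * Real.log (1 - ∑ i, lam m s' ρ x i) +
        ∑ i, lam m s' ρ x i * Real.log (lam m s' ρ x i)) -
      ∑ i, ρ i * lam m s' ρ x i) = fun s' => Bfun m s' ρ x := by
    funext s'
    simp [Bfun, bfun, ent, lam]
  rw [heq] at htotal
  refine htotal.congr_deriv ?_
  simp only [Bs1]
  ring

lemma hasDerivAt_Bs1 (ρ x : Fin m → ℝ) {s : ℝ}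
    (hlam : ∀ i, lam m s ρ x i ≠ 0) (hlam0 : 1 - ∑ i, lam m s ρ x i ≠ 0) :
    HasDerivAt (fun s' => Bs1 m s' ρ x) (Bs2 m s ρ x) s := by
  have h0 : HasDerivAt (fun s' => (Real.log (1 - ∑ i, lam m s' ρ x i) + 1) *
      (-∑ i, dd m ρ x i))
      ((-∑ i, dd m ρ x i) / (1 - ∑ i, lam m s ρ x i) * (-∑ i, dd m ρ x i)) s :=
    (((hasDerivAt_lam0 ρ x s).log hlam0).add_const 1).mul_const _
  have hi : ∀ i : Fin m, HasDerivAt (fun s' => (Real.log (lam m s' ρ x i) + 1) * dd m ρ x i)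
      (dd m ρ x i / lam m s ρ x i * dd m ρ x i) s := fun i =>
    ((((hasDerivAt_lam ρ x s i) : HasDerivAt (fun s' => lam m s' ρ x i) (dd m ρ x i) s).log
      (hlam i)).add_const 1).mul_const _
  have hsum : HasDerivAt (fun s' => ∑ i, (Real.log (lam m s' ρ x i) + 1) * dd m ρ x i)
      (∑ i, dd m ρ x i / lam m s ρ x i * dd m ρ x i) s :=
    HasDerivAt.fun_sum fun i _ => hi i
  simp only [Bs1, Bs2]
  exact (h0.add hsum).sub_const _

lemma Bs1_zero (ρ x : Fin m → ℝ) : Bs1 m 0 ρ x = 0 := by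
  have hlam : ∀ i, lam m 0 ρ x i = mu m ρ i := fun i => by simp [lam]
  have hlog : ∀ i, Real.log (mu m ρ i) = ρ i - Real.log (1 + ∑ j, Real.exp (ρ j)) := by
    intro i
    rw [mu, Real.log_div (Real.exp_ne_zero _) (Epos ρ).ne', Real.log_exp]
  simp only [Bs1, hlam]
  rw [one_sub_sum_mu, one_div, Real.log_inv]
  rw [Finset.sum_congr rfl (fun i _ => by rw [hlog i] : ∀ i ∈ Finset.univ,
    (Real.log (mu m ρ i) + 1) * dd m ρ x i =
      (ρ i - Real.log (1 + ∑ j, Real.exp (ρ j)) + 1) * dd m ρ x i)]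
  simp only [sub_add_eq_add_sub, sub_mul, add_mul]
  rw [Finset.sum_sub_distrib, Finset.sum_add_distrib]
  simp only [one_mul]
  rw [← Finset.mul_sum]
  ring

lemma Bs2_pos {x : Fin m → ℝ} {ρ : Fin m → ℝ} (hx : x ∈ simplex m)
    (hne : ∃ i, x i ≠ mu m ρ i) {s : ℝ} (hs : 0 ≤ s) (hs1 : s < 1) :
    0 < Bs2 m s ρ x := by
  obtain ⟨i0, hi0⟩ := hne
  have hlp := lam_pos hx hs hs1 ρ
  have hlp0 := lam0_pos hx hs hs1 ρ
  have h1 : 0 ≤ (-∑ i, dd m ρ x i) / (1 - ∑ i, lam m s ρ x i) * (-∑ i, dd m ρ x i) := by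
    have he : (-∑ i, dd m ρ x i) / (1 - ∑ i, lam m s ρ x i) * (-∑ i, dd m ρ x i)
        = (∑ i, dd m ρ x i)^2 / (1 - ∑ i, lam m s ρ x i) := by ring
    rw [he]; positivity
  have h2 : 0 < ∑ i, dd m ρ x i / lam m s ρ x i * dd m ρ x i := by
    apply Finset.sum_pos'
    · intro i _
      have h3 := hlp i
      have he : dd m ρ x i / lam m s ρ x i * dd m ρ x i
          = (dd m ρ x i)^2 / lam m s ρ x i := by ring
      rw [he]; positivity
    · refine ⟨i0, Finset.mem_univ _, ?_⟩
      have h3 := hlp i0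
      have h4 : dd m ρ x i0 ≠ 0 := sub_ne_zero.mpr hi0
      have he : dd m ρ x i0 / lam m s ρ x i0 * dd m ρ x i0
          = (dd m ρ x i0)^2 / lam m s ρ x i0 := by ring
      rw [he]; positivity
  simp only [Bs2]; linarith

lemma Bs1_pos {x ρ : Fin m → ℝ} (hx : x ∈ simplex m) (hne : ∃ i, x i ≠ mu m ρ i)
    {s : ℝ} (hs : 0 < s) (hs1 : s < 1) : 0 < Bs1 m s ρ x := by
  have key : StrictMonoOn (fun s' => Bs1 m s' ρ x) (Set.Ico 0 1) := by
    apply strictMonoOn_of_deriv_pos (convex_Ico 0 1)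
    · intro u hu
      exact (hasDerivAt_Bs1 ρ x (fun i => (lam_pos hx hu.1 hu.2 ρ i).ne')
        (lam0_pos hx hu.1 hu.2 ρ).ne').continuousAt.continuousWithinAt
    · intro u hu
      rw [interior_Ico] at hu
      rw [(hasDerivAt_Bs1 ρ x (fun i => (lam_pos hx hu.1.le hu.2 ρ i).ne')
        (lam0_pos hx hu.1.le hu.2 ρ).ne').deriv]
      exact Bs2_pos hx hne hu.1.le hu.2
  have h := key (Set.mem_Ico.mpr ⟨le_refl 0, one_pos⟩) (Set.mem_Ico.mpr ⟨hs.le, hs1⟩) hs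
  simpa [Bs1_zero] using h

lemma continuous_Bfun :
    Continuous (fun w : ℝ × (Fin m → ℝ) × (Fin m → ℝ) => Bfun m w.1 w.2.1 w.2.2) := by
  have hE : Continuous (fun w : ℝ × (Fin m → ℝ) × (Fin m → ℝ) =>
      1 + ∑ i, Real.exp (w.2.1 i)) :=
    continuous_const.add (continuous_finset_sum _ fun i _ =>
      Real.continuous_exp.comp ((continuous_apply i).comp (continuous_fst.comp continuous_snd)))
  have hEne : ∀ w : ℝ × (Fin m → ℝ) × (Fin m → ℝ),
      1 + ∑ i, Real.exp (w.2.1 i) ≠ 0 := fun w => (Epos _).ne'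
  have hlam : ∀ i : Fin m, Continuous
      (fun w : ℝ × (Fin m → ℝ) × (Fin m → ℝ) => lam m w.1 w.2.1 w.2.2 i) := by
    intro i
    simp only [lam, mu]
    exact ((continuous_const.sub continuous_fst).mul
      ((Real.continuous_exp.comp ((continuous_apply i).comp
        (continuous_fst.comp continuous_snd))).div hE hEne)).add
      (continuous_fst.mul ((continuous_apply i).comp (continuous_snd.comp continuous_snd)))
  have hsum : Continuous (fun w : ℝ × (Fin m → ℝ) × (Fin m → ℝ) =>
      ∑ i, lam m w.1 w.2.1 w.2.2 i) := continuous_finset_sum _ fun i _ => hlam i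
  have heq : (fun w : ℝ × (Fin m → ℝ) × (Fin m → ℝ) => Bfun m w.1 w.2.1 w.2.2)
      = fun w => Real.log (1 + ∑ i, Real.exp (w.2.1 i))
        + ((1 - ∑ i, lam m w.1 w.2.1 w.2.2 i) * Real.log (1 - ∑ i, lam m w.1 w.2.1 w.2.2 i)
          + ∑ i, lam m w.1 w.2.1 w.2.2 i * Real.log (lam m w.1 w.2.1 w.2.2 i))
        - ∑ i, w.2.1 i * lam m w.1 w.2.1 w.2.2 i := by
    funext w
    simp [Bfun, bfun, ent, lam]
  rw [heq]
  exact ((hE.log hEne).add ((Real.continuous_mul_log.comp (continuous_const.sub hsum)).add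
    (continuous_finset_sum _ fun i _ => Real.continuous_mul_log.comp (hlam i)))).sub
    (continuous_finset_sum _ fun i _ =>
      ((continuous_apply i).comp (continuous_fst.comp continuous_snd)).mul (hlam i))

lemma continuous_Bfun_s (ρ x : Fin m → ℝ) : Continuous (fun s => Bfun m s ρ x) := by
  have h : Continuous (fun s : ℝ => (s, ρ, x)) := continuous_id.prodMk continuous_const
  have he : (fun s : ℝ => Bfun m s ρ x)
      = (fun w : ℝ × (Fin m → ℝ) × (Fin m → ℝ) => Bfun m w.1 w.2.1 w.2.2)
        ∘ (fun s : ℝ => (s, ρ, x)) := rfl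
  rw [he]
  exact continuous_Bfun.comp h

lemma strictMonoOn_Bfun {x : Fin m → ℝ} (hx : x ∈ frontier (simplex m)) (ρ : Fin m → ℝ) :
    StrictMonoOn (fun s => Bfun m s ρ x) (Set.Icc 0 1) := by
  have hxs := mem_simplex_of_frontier hx
  have hne := frontier_ne_mu hx ρ
  apply strictMonoOn_of_deriv_pos (convex_Icc 0 1)
  · exact (continuous_Bfun_s ρ x).continuousOn
  · intro u hu
    rw [interior_Icc] at hu
    rw [(hasDerivAt_Bfun_s ρ x (fun i => (lam_pos hxs hu.1.le hu.2 ρ i).ne')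
      (lam0_pos hxs hu.1.le hu.2 ρ).ne').deriv]
    exact Bs1_pos hxs hne hu.1 hu.2

lemma Bfun_zero (ρ x : Fin m → ℝ) : Bfun m 0 ρ x = 0 := by
  have hlam : lam m 0 ρ x = mu m ρ := by funext i; simp [lam]
  have hlog : ∀ i : Fin m, Real.log (mu m ρ i) = ρ i - Real.log (1 + ∑ j, Real.exp (ρ j)) := by
    intro i
    rw [mu, Real.log_div (Real.exp_ne_zero _) (Epos ρ).ne', Real.log_exp]
  rw [Bfun_eq, hlam, bfun, ent]
  rw [one_sub_sum_mu, one_div, Real.log_inv]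
  rw [Finset.sum_congr rfl (fun i _ => by rw [hlog i] : ∀ i ∈ Finset.univ,
    mu m ρ i * Real.log (mu m ρ i) =
      mu m ρ i * (ρ i - Real.log (1 + ∑ j, Real.exp (ρ j))))]
  simp only [mul_sub]
  rw [Finset.sum_sub_distrib, ← Finset.sum_mul]
  have h1 : ∑ i, ρ i * mu m ρ i = ∑ i, mu m ρ i * ρ i :=
    Finset.sum_congr rfl fun i _ => mul_comm _ _
  have h2 : 1 - ∑ i, mu m ρ i = 1 / (1 + ∑ i, Real.exp (ρ i)) := one_sub_sum_mu ρ
  rw [h1]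
  have h3 : (0:ℝ) < 1 + ∑ i, Real.exp (ρ i) := Epos ρ
  have h4 : ∑ i, mu m ρ i = 1 - 1 / (1 + ∑ i, Real.exp (ρ i)) := by linarith
  rw [h4]
  ring

lemma Bfun_one (ρ x : Fin m → ℝ) : Bfun m 1 ρ x = bfun m x ρ := by
  rw [Bfun_eq]
  congr 1
  funext i
  simp [lam]

end HD

namespace HD
variable {m : ℕ}

lemma continuous_E : Continuous (fun ρ : Fin m → ℝ => 1 + ∑ i, Real.exp (ρ i)) :=
  continuous_const.add (continuous_finset_sum _ fun i _ =>
    Real.continuous_exp.comp (continuous_apply i))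

lemma continuous_bfun_rho (x : Fin m → ℝ) : Continuous (fun ρ => bfun m x ρ) := by
  simp only [bfun]
  exact ((continuous_E.log fun ρ => (Epos ρ).ne').add continuous_const).sub
    (continuous_finset_sum _ fun i _ => (continuous_apply i).mul continuous_const)

lemma continuous_update (ρ : Fin m → ℝ) (p : Fin m) :
    Continuous (fun r : ℝ => Function.update ρ p r) := by
  apply continuous_pi
  intro i
  by_cases hip : i = p
  · subst hip; simp only [Function.update_self]; exact continuous_id
  · simp only [Function.update_of_ne hip]; exact continuous_const

/-- Master continuity lemma for `h`. -/
lemma h_tendsto (h : ℝ → (Fin m → ℝ) → (Fin m → ℝ) → ℝ)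
    (hh : ∀ t ρ x, x ∈ frontier (simplex m) → 0 < t → t < bfun m x ρ →
      h t ρ x ∈ Set.Ioo (0 : ℝ) 1 ∧ Bfun m (h t ρ x) ρ x = t)
    {α : Type*} {l : Filter α} {T : α → ℝ} {P X : α → Fin m → ℝ}
    {t₀ : ℝ} {ρ₀ x₀ : Fin m → ℝ} (hx₀ : x₀ ∈ frontier (simplex m)) (ht₀ : 0 < t₀)
    (htb : t₀ < bfun m x₀ ρ₀)
    (hT : Filter.Tendsto T l (nhds t₀)) (hP : Filter.Tendsto P l (nhds ρ₀))
    (hX : Filter.Tendsto X l (nhds x₀))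
    (hev : ∀ᶠ a in l, X a ∈ frontier (simplex m) ∧ 0 < T a ∧ T a < bfun m (X a) (P a)) :
    Filter.Tendsto (fun a => h (T a) (P a) (X a)) l (nhds (h t₀ ρ₀ x₀)) := by
  obtain ⟨hs₀I, hBs₀⟩ := hh t₀ ρ₀ x₀ hx₀ ht₀ htb
  set s₀ := h t₀ ρ₀ x₀ with hs₀def
  rw [Metric.tendsto_nhds]
  intro ε hε
  set s₁ := max (s₀/2) (s₀ - ε) with hs₁def
  set s₂ := min ((s₀+1)/2) (s₀ + ε) with hs₂def
  have hs₁0 : 0 < s₁ := lt_max_of_lt_left (by linarith [hs₀I.1])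
  have hs₁lt : s₁ < s₀ := max_lt (by linarith [hs₀I.1]) (by linarith)
  have hs₂gt : s₀ < s₂ := lt_min (by linarith [hs₀I.2]) (by linarith)
  have hs₂1 : s₂ < 1 := min_lt_of_left_lt (by linarith [hs₀I.2])
  have hs₁Icc : s₁ ∈ Set.Icc (0:ℝ) 1 := ⟨hs₁0.le, by linarith [hs₀I.2]⟩
  have hs₂Icc : s₂ ∈ Set.Icc (0:ℝ) 1 := ⟨by linarith [hs₀I.1], hs₂1.le⟩
  have hs₀Icc : s₀ ∈ Set.Icc (0:ℝ) 1 := ⟨hs₀I.1.le, hs₀I.2.le⟩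
  have hB1 : Bfun m s₁ ρ₀ x₀ < t₀ := by
    have := strictMonoOn_Bfun hx₀ ρ₀ hs₁Icc hs₀Icc hs₁lt
    simpa [hBs₀] using this
  have hB2 : t₀ < Bfun m s₂ ρ₀ x₀ := by
    have := strictMonoOn_Bfun hx₀ ρ₀ hs₀Icc hs₂Icc hs₂gt
    simpa [hBs₀] using this
  have hBtend : ∀ u : ℝ, Filter.Tendsto (fun a => Bfun m u (P a) (X a)) l
      (nhds (Bfun m u ρ₀ x₀)) := by
    intro u
    have hc : Filter.Tendsto (fun a => ((u : ℝ), P a, X a)) l (nhds (u, ρ₀, x₀)) :=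
      tendsto_const_nhds.prodMk_nhds (hP.prodMk_nhds hX)
    have he : (fun a => Bfun m u (P a) (X a))
        = (fun w : ℝ × (Fin m → ℝ) × (Fin m → ℝ) => Bfun m w.1 w.2.1 w.2.2)
          ∘ (fun a => ((u : ℝ), P a, X a)) := rfl
    rw [he]
    exact (continuous_Bfun.continuousAt (x := (u, ρ₀, x₀))).tendsto.comp hc
  have htend1 := hBtend s₁
  have htend2 := hBtend s₂
  have hev1 : ∀ᶠ a in l, Bfun m s₁ (P a) (X a) < T a := htend1.eventually_lt hT hB1
  have hev2 : ∀ᶠ a in l, T a < Bfun m s₂ (P a) (X a) := hT.eventually_lt htend2 hB2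
  filter_upwards [hev, hev1, hev2] with a ha h1 h2
  obtain ⟨hXa, hTa, hTba⟩ := ha
  obtain ⟨hsaI, hBa⟩ := hh (T a) (P a) (X a) hXa hTa hTba
  set sa := h (T a) (P a) (X a) with hsadef
  have hsaIcc : sa ∈ Set.Icc (0:ℝ) 1 := ⟨hsaI.1.le, hsaI.2.le⟩
  have mono := strictMonoOn_Bfun hXa (P a)
  have hlt1 : s₁ < sa := by
    by_contra hc
    push_neg at hc
    have := mono.monotoneOn hsaIcc hs₁Icc hc
    rw [hBa] at this
    linarith
  have hlt2 : sa < s₂ := by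
    by_contra hc
    push_neg at hc
    have := mono.monotoneOn hs₂Icc hsaIcc hc
    rw [hBa] at this
    linarith
  rw [Real.dist_eq, abs_sub_lt_iff]
  constructor
  · have : s₂ ≤ s₀ + ε := min_le_right _ _
    linarith
  · have : s₀ - ε ≤ s₁ := le_max_right _ _
    linarith

end HD

namespace HD

/-- One-dimensional implicit function theorem, custom version. -/
lemma implicit_hasDerivAt {F : ℝ × ℝ → ℝ} {L : ℝ × ℝ →L[ℝ] ℝ} {z : ℝ × ℝ}
    (hF : HasStrictFDerivAt F L z) (hL : L (0, 1) ≠ 0)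
    {g : ℝ → ℝ} (hg : ContinuousAt g z.1) (hgz : g z.1 = z.2)
    (hfg : ∀ᶠ r in nhds z.1, F (r, g r) = F z) :
    HasDerivAt g (-(L (1, 0)) / L (0, 1)) z.1 := by
  have hlin : ∀ u v : ℝ, L (u, v) = u * L (1, 0) + v * L (0, 1) := by
    intro u v
    have h1 : ((u, v) : ℝ × ℝ) = u • ((1:ℝ), (0:ℝ)) + v • ((0:ℝ), (1:ℝ)) := by
      simp [Prod.ext_iff]
    rw [h1, map_add, _root_.map_smul, _root_.map_smul, smul_eq_mul, smul_eq_mul]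
  set f₁ : ℝ × ℝ →L[ℝ] ℝ × ℝ := (ContinuousLinearMap.fst ℝ ℝ ℝ).prod L with hf₁
  set f₂ : ℝ × ℝ →L[ℝ] ℝ × ℝ := (ContinuousLinearMap.fst ℝ ℝ ℝ).prod
    ((L (0, 1))⁻¹ • (ContinuousLinearMap.snd ℝ ℝ ℝ
      - L ((1:ℝ), (0:ℝ)) • ContinuousLinearMap.fst ℝ ℝ ℝ)) with hf₂
  have h₁ : Function.LeftInverse f₂ f₁ := by
    rintro ⟨u, v⟩
    simp only [hf₁, hf₂, ContinuousLinearMap.prod_apply, ContinuousLinearMap.coe_fst',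
      ContinuousLinearMap.smul_apply, ContinuousLinearMap.sub_apply,
      ContinuousLinearMap.coe_snd', smul_eq_mul]
    refine Prod.ext rfl ?_
    simp only [hlin u v]
    field_simp
    ring
  have h₂ : Function.RightInverse f₂ f₁ := by
    rintro ⟨u, v⟩
    simp only [hf₁, hf₂, ContinuousLinearMap.prod_apply, ContinuousLinearMap.coe_fst',
      ContinuousLinearMap.smul_apply, ContinuousLinearMap.sub_apply,
      ContinuousLinearMap.coe_snd', smul_eq_mul]
    refine Prod.ext rfl ?_
    rw [hlin]
    field_simp
    ring
  set e : (ℝ × ℝ) ≃L[ℝ] (ℝ × ℝ) := ContinuousLinearEquiv.equivOfInverse f₁ f₂ h₁ h₂ with he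
  have hΦ : HasStrictFDerivAt (fun p : ℝ × ℝ => (p.1, F p)) (e : (ℝ × ℝ) →L[ℝ] (ℝ × ℝ)) z := by
    have h := ((ContinuousLinearMap.fst ℝ ℝ ℝ).hasStrictFDerivAt (x := z)).prodMk hF
    have hcoe : (e : (ℝ × ℝ) →L[ℝ] (ℝ × ℝ)) = f₁ := rfl
    rw [hcoe]
    exact h
  set G := hΦ.localInverse _ _ _ with hG
  have hGd : HasStrictFDerivAt G (e.symm : (ℝ × ℝ) →L[ℝ] (ℝ × ℝ)) (z.1, F z) :=
    hΦ.to_localInverse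
  have hevG : ∀ᶠ p in nhds z, G (p.1, F p) = p := hΦ.eventually_left_inverse
  have hrg : Filter.Tendsto (fun r => (r, g r)) (nhds z.1) (nhds z) := by
    have h0 : Filter.Tendsto (fun r => (r, g r)) (nhds z.1) (nhds (z.1, g z.1)) :=
      continuousAt_id.prodMk hg
    rw [hgz, Prod.mk.eta] at h0
    exact h0
  have hev2 : ∀ᶠ r in nhds z.1, G (r, F (r, g r)) = (r, g r) := hrg.eventually hevG
  have heq : (fun r => g r) =ᶠ[nhds z.1] (fun r => (G (r, F z)).2) := by
    filter_upwards [hev2, hfg] with r h1 h2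
    rw [h2] at h1
    rw [h1]
  have h1 : HasDerivAt (fun r : ℝ => (r, F z)) ((1:ℝ), (0:ℝ)) z.1 :=
    (hasDerivAt_id z.1).prodMk (hasDerivAt_const _ _)
  have h2 : HasDerivAt (fun r => G (r, F z)) (e.symm ((1:ℝ), (0:ℝ))) z.1 :=
    by have := hGd.hasFDerivAt.comp_hasDerivAt z.1 h1; exact this
  have h3 : HasDerivAt (fun r => (G (r, F z)).2) ((e.symm ((1:ℝ), (0:ℝ))).2) z.1 := h2.snd
  have h4 : HasDerivAt g ((e.symm ((1:ℝ), (0:ℝ))).2) z.1 := h3.congr_of_eventuallyEq heq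
  have h5 : (e.symm ((1:ℝ), (0:ℝ))).2 = -(L (1, 0)) / L (0, 1) := by
    rw [he, ContinuousLinearEquiv.symm_equivOfInverse]
    simp only [ContinuousLinearEquiv.equivOfInverse_apply, hf₂,
      ContinuousLinearMap.prod_apply, ContinuousLinearMap.smul_apply,
      ContinuousLinearMap.sub_apply, ContinuousLinearMap.coe_snd',
      ContinuousLinearMap.coe_fst', smul_eq_mul]
    field_simp
    ring
  rwa [h5] at h4

end HD

namespace HD
variable {m : ℕ}

lemma contDiffAt_F (q : Fin m) (ρ x : Fin m → ℝ) {p₀ : ℝ × ℝ}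
    (hlam : ∀ i, lam m p₀.2 (Function.update ρ q p₀.1) x i ≠ 0)
    (hlam0 : 1 - ∑ i, lam m p₀.2 (Function.update ρ q p₀.1) x i ≠ 0) :
    ContDiffAt ℝ 1 (fun p : ℝ × ℝ => Bfun m p.2 (Function.update ρ q p.1) x) p₀ := by
  have hupd : ∀ i : Fin m, ContDiffAt ℝ 1 (fun p : ℝ × ℝ => Function.update ρ q p.1 i) p₀ := by
    intro i
    by_cases hiq : i = q
    · have he : (fun p : ℝ × ℝ => Function.update ρ q p.1 i) = fun p => p.1 := by
        funext p; rw [hiq, Function.update_self]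
      rw [he]; exact contDiffAt_fst
    · have he : (fun p : ℝ × ℝ => Function.update ρ q p.1 i) = fun _ => ρ i := by
        funext p; simp [Function.update_of_ne hiq]
      rw [he]; exact contDiffAt_const
  have hexp : ∀ i : Fin m, ContDiffAt ℝ 1
      (fun p : ℝ × ℝ => Real.exp (Function.update ρ q p.1 i)) p₀ := fun i =>
    ((Real.contDiff_exp.of_le le_top).contDiffAt).comp p₀ (hupd i)
  have hE : ContDiffAt ℝ 1
      (fun p : ℝ × ℝ => 1 + ∑ j, Real.exp (Function.update ρ q p.1 j)) p₀ :=
    contDiffAt_const.add (ContDiffAt.sum fun j _ => hexp j)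
  have hEne : (1 + ∑ j, Real.exp (Function.update ρ q p₀.1 j)) ≠ 0 := (Epos _).ne'
  have hmu : ∀ i : Fin m, ContDiffAt ℝ 1
      (fun p : ℝ × ℝ => mu m (Function.update ρ q p.1) i) p₀ := by
    intro i
    simp only [mu]
    exact (hexp i).div hE hEne
  have hlami : ∀ i : Fin m, ContDiffAt ℝ 1
      (fun p : ℝ × ℝ => lam m p.2 (Function.update ρ q p.1) x i) p₀ := by
    intro i
    simp only [lam]
    exact ((contDiffAt_const.sub contDiffAt_snd).mul (hmu i)).add
      (contDiffAt_snd.mul contDiffAt_const)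
  have hsum : ContDiffAt ℝ 1
      (fun p : ℝ × ℝ => ∑ i, lam m p.2 (Function.update ρ q p.1) x i) p₀ :=
    ContDiffAt.sum fun i _ => hlami i
  have h0 : ContDiffAt ℝ 1
      (fun p : ℝ × ℝ => 1 - ∑ i, lam m p.2 (Function.update ρ q p.1) x i) p₀ :=
    contDiffAt_const.sub hsum
  have hml0 : ContDiffAt ℝ 1 (fun p : ℝ × ℝ =>
      (1 - ∑ i, lam m p.2 (Function.update ρ q p.1) x i) *
      Real.log (1 - ∑ i, lam m p.2 (Function.update ρ q p.1) x i)) p₀ :=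
    h0.mul (by have := (Real.contDiffAt_log.2 hlam0).comp p₀ h0; exact this)
  have hmli : ∀ i : Fin m, ContDiffAt ℝ 1 (fun p : ℝ × ℝ =>
      lam m p.2 (Function.update ρ q p.1) x i *
      Real.log (lam m p.2 (Function.update ρ q p.1) x i)) p₀ := fun i =>
    (hlami i).mul (by have := (Real.contDiffAt_log.2 (hlam i)).comp p₀ (hlami i); exact this)
  have hlin : ContDiffAt ℝ 1 (fun p : ℝ × ℝ =>
      ∑ i, Function.update ρ q p.1 i * lam m p.2 (Function.update ρ q p.1) x i) p₀ :=
    ContDiffAt.sum fun i _ => (hupd i).mul (hlami i)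
  have hlogE : ContDiffAt ℝ 1 (fun p : ℝ × ℝ =>
      Real.log (1 + ∑ j, Real.exp (Function.update ρ q p.1 j))) p₀ :=
    by have := (Real.contDiffAt_log.2 hEne).comp p₀ hE; exact this
  have heq : (fun p : ℝ × ℝ => Bfun m p.2 (Function.update ρ q p.1) x)
      = fun p : ℝ × ℝ =>
        Real.log (1 + ∑ j, Real.exp (Function.update ρ q p.1 j))
        + ((1 - ∑ i, lam m p.2 (Function.update ρ q p.1) x i) *
            Real.log (1 - ∑ i, lam m p.2 (Function.update ρ q p.1) x i)
          + ∑ i, lam m p.2 (Function.update ρ q p.1) x i *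
              Real.log (lam m p.2 (Function.update ρ q p.1) x i))
        - ∑ i, Function.update ρ q p.1 i * lam m p.2 (Function.update ρ q p.1) x i := by
    funext p
    simp [Bfun, bfun, ent, lam]
  rw [heq]
  exact (hlogE.add (hml0.add (ContDiffAt.sum fun i _ => hmli i))).sub hlin

end HD

namespace HD
variable {m : ℕ}

def muP (m : ℕ) (q : Fin m) (ρ : Fin m → ℝ) : Fin m → ℝ := fun i =>
  ((if i = q then Real.exp (ρ q) else 0) * (1 + ∑ j, Real.exp (ρ j))
    - Real.exp (ρ i) * Real.exp (ρ q)) / (1 + ∑ j, Real.exp (ρ j))^2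

def Brho (m : ℕ) (q : Fin m) (s : ℝ) (ρ x : Fin m → ℝ) : ℝ :=
  Real.exp (ρ q) / (1 + ∑ j, Real.exp (ρ j))
  + ((Real.log (1 - ∑ i, lam m s ρ x i) + 1) * (-∑ i, (1 - s) * muP m q ρ i)
     + ∑ i, (Real.log (lam m s ρ x i) + 1) * ((1 - s) * muP m q ρ i))
  - ∑ i, ((if i = q then (1:ℝ) else 0) * lam m s ρ x i + ρ i * ((1 - s) * muP m q ρ i))

lemma hasDerivAt_Bfun_rho (q : Fin m) {s : ℝ} {ρ x : Fin m → ℝ}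
    (hlam : ∀ i, lam m s ρ x i ≠ 0) (hlam0 : 1 - ∑ i, lam m s ρ x i ≠ 0) :
    HasDerivAt (fun r => Bfun m s (Function.update ρ q r) x) (Brho m q s ρ x) (ρ q) := by
  have hupd : ∀ i : Fin m, HasDerivAt (fun r => Function.update ρ q r i)
      (if i = q then (1:ℝ) else 0) (ρ q) := by
    intro i
    by_cases hiq : i = q
    · have he : (fun r : ℝ => Function.update ρ q r i) = fun r => r := by
        funext r; rw [hiq, Function.update_self]
      rw [he, if_pos hiq]
      exact hasDerivAt_id _
    · have he : (fun r : ℝ => Function.update ρ q r i) = fun _ => ρ i := by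
        funext r; rw [Function.update_of_ne hiq]
      rw [he, if_neg hiq]
      exact hasDerivAt_const _ _
  have hexp : ∀ i : Fin m, HasDerivAt (fun r => Real.exp (Function.update ρ q r i))
      ((if i = q then (1:ℝ) else 0) * Real.exp (ρ i)) (ρ q) := by
    intro i
    have h := (Real.hasDerivAt_exp (Function.update ρ q (ρ q) i)).comp (ρ q) (hupd i)
    rw [Function.update_eq_self] at h
    refine h.congr_deriv ?_
    ring
  have hE : HasDerivAt (fun r => 1 + ∑ j, Real.exp (Function.update ρ q r j))
      (Real.exp (ρ q)) (ρ q) := by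
    have h := (HasDerivAt.fun_sum fun j (_ : j ∈ Finset.univ) => hexp j).const_add (1:ℝ)
    refine h.congr_deriv ?_
    rw [Finset.sum_congr rfl (fun j _ => by rw [ite_mul, zero_mul, one_mul] :
      ∀ j ∈ Finset.univ, (if j = q then (1:ℝ) else 0) * Real.exp (ρ j)
        = if j = q then Real.exp (ρ j) else 0)]
    rw [Finset.sum_ite_eq' Finset.univ q (fun j => Real.exp (ρ j))]
    simp
  have hEvalne : (1 + ∑ j, Real.exp (Function.update ρ q (ρ q) j)) ≠ 0 := by
    rw [Function.update_eq_self]; exact (Epos ρ).ne'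
  have hmu : ∀ i : Fin m, HasDerivAt (fun r => mu m (Function.update ρ q r) i)
      (muP m q ρ i) (ρ q) := by
    intro i
    simp only [mu]
    have h := (hexp i).div hE hEvalne
    rw [Function.update_eq_self] at h
    refine h.congr_deriv ?_
    simp only [muP]
    by_cases hiq : i = q
    · rw [if_pos hiq, if_pos hiq, hiq]; ring
    · rw [if_neg hiq, if_neg hiq]; ring
  have hlami : ∀ i : Fin m, HasDerivAt (fun r => lam m s (Function.update ρ q r) x i)
      ((1 - s) * muP m q ρ i) (ρ q) := by
    intro i
    simp only [lam]
    exact ((hmu i).const_mul (1 - s)).add_const (s * x i)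
  have hsum : HasDerivAt (fun r => ∑ i, lam m s (Function.update ρ q r) x i)
      (∑ i, (1 - s) * muP m q ρ i) (ρ q) := HasDerivAt.fun_sum fun i _ => hlami i
  have h0 : HasDerivAt (fun r => 1 - ∑ i, lam m s (Function.update ρ q r) x i)
      (-∑ i, (1 - s) * muP m q ρ i) (ρ q) := hsum.const_sub 1
  have hlam0' : 1 - ∑ i, lam m s (Function.update ρ q (ρ q)) x i ≠ 0 := by
    rw [Function.update_eq_self]; exact hlam0
  have hml0 : HasDerivAt (fun r => (1 - ∑ i, lam m s (Function.update ρ q r) x i) *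
      Real.log (1 - ∑ i, lam m s (Function.update ρ q r) x i))
      ((Real.log (1 - ∑ i, lam m s ρ x i) + 1) * (-∑ i, (1 - s) * muP m q ρ i)) (ρ q) := by
    have h := (Real.hasDerivAt_mul_log hlam0').comp (ρ q) h0
    rw [Function.update_eq_self] at h
    exact h
  have hmli : ∀ i : Fin m, HasDerivAt (fun r => lam m s (Function.update ρ q r) x i *
      Real.log (lam m s (Function.update ρ q r) x i))
      ((Real.log (lam m s ρ x i) + 1) * ((1 - s) * muP m q ρ i)) (ρ q) := by
    intro i
    have hne : lam m s (Function.update ρ q (ρ q)) x i ≠ 0 := by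
      rw [Function.update_eq_self]; exact hlam i
    have h := (Real.hasDerivAt_mul_log hne).comp (ρ q) (hlami i)
    rw [Function.update_eq_self] at h
    exact h
  have hlin : HasDerivAt (fun r => ∑ i, Function.update ρ q r i *
      lam m s (Function.update ρ q r) x i)
      (∑ i, ((if i = q then (1:ℝ) else 0) * lam m s ρ x i + ρ i * ((1 - s) * muP m q ρ i)))
      (ρ q) := by
    apply HasDerivAt.fun_sum
    intro i _
    have h := (hupd i).mul (hlami i)
    rw [Function.update_eq_self] at h
    exact h
  have hlogE : HasDerivAt (fun r => Real.log (1 + ∑ j, Real.exp (Function.update ρ q r j)))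
      (Real.exp (ρ q) / (1 + ∑ j, Real.exp (ρ j))) (ρ q) := by
    have h := hE.log hEvalne
    rw [Function.update_eq_self] at h
    exact h
  have htotal := (hlogE.fun_add (hml0.fun_add (HasDerivAt.fun_sum fun i (_ : i ∈ Finset.univ) => hmli i))).fun_sub hlin
  have heq : (fun r : ℝ =>
      Real.log (1 + ∑ j, Real.exp (Function.update ρ q r j))
      + ((1 - ∑ i, lam m s (Function.update ρ q r) x i) *
          Real.log (1 - ∑ i, lam m s (Function.update ρ q r) x i)
        + ∑ i, lam m s (Function.update ρ q r) x i *
            Real.log (lam m s (Function.update ρ q r) x i))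
      - ∑ i, Function.update ρ q r i * lam m s (Function.update ρ q r) x i)
      = fun r => Bfun m s (Function.update ρ q r) x := by
    funext r
    simp [Bfun, bfun, ent, lam]
  rw [heq] at htotal
  exact htotal

end HD

namespace HD
variable {m : ℕ}

lemma continuous_Ew : Continuous (fun w : ℝ × (Fin m → ℝ) × (Fin m → ℝ) =>
    1 + ∑ j, Real.exp (w.2.1 j)) :=
  continuous_const.add (continuous_finset_sum _ fun j _ =>
    Real.continuous_exp.comp ((continuous_apply j).comp (continuous_fst.comp continuous_snd)))

lemma continuous_muw (i : Fin m) :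
    Continuous (fun w : ℝ × (Fin m → ℝ) × (Fin m → ℝ) => mu m w.2.1 i) := by
  simp only [mu]
  exact (Real.continuous_exp.comp ((continuous_apply i).comp
    (continuous_fst.comp continuous_snd))).div continuous_Ew (fun w => (Epos _).ne')

lemma continuous_lamw (i : Fin m) :
    Continuous (fun w : ℝ × (Fin m → ℝ) × (Fin m → ℝ) => lam m w.1 w.2.1 w.2.2 i) := by
  simp only [lam]
  exact ((continuous_const.sub continuous_fst).mul (continuous_muw i)).add
    (continuous_fst.mul ((continuous_apply i).comp (continuous_snd.comp continuous_snd)))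

lemma continuous_ddw (i : Fin m) :
    Continuous (fun w : ℝ × (Fin m → ℝ) × (Fin m → ℝ) => dd m w.2.1 w.2.2 i) := by
  simp only [dd]
  exact ((continuous_apply i).comp (continuous_snd.comp continuous_snd)).sub (continuous_muw i)

lemma continuous_muPw (q i : Fin m) :
    Continuous (fun w : ℝ × (Fin m → ℝ) × (Fin m → ℝ) => muP m q w.2.1 i) := by
  simp only [muP]
  have hq : Continuous (fun w : ℝ × (Fin m → ℝ) × (Fin m → ℝ) => Real.exp (w.2.1 q)) :=
    Real.continuous_exp.comp ((continuous_apply q).comp (continuous_fst.comp continuous_snd))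
  have hi : Continuous (fun w : ℝ × (Fin m → ℝ) × (Fin m → ℝ) => Real.exp (w.2.1 i)) :=
    Real.continuous_exp.comp ((continuous_apply i).comp (continuous_fst.comp continuous_snd))
  have hnum : Continuous (fun w : ℝ × (Fin m → ℝ) × (Fin m → ℝ) =>
      (if i = q then Real.exp (w.2.1 q) else 0) * (1 + ∑ j, Real.exp (w.2.1 j))
        - Real.exp (w.2.1 i) * Real.exp (w.2.1 q)) := by
    by_cases hiq : i = q
    · simp only [if_pos hiq]
      exact (hq.mul continuous_Ew).sub (hi.mul hq)
    · simp only [if_neg hiq]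
      exact (continuous_const.mul continuous_Ew).sub (hi.mul hq)
  exact hnum.div (continuous_Ew.pow 2) (fun w => pow_ne_zero 2 (Epos _).ne')

lemma continuousAt_Bs1w {w : ℝ × (Fin m → ℝ) × (Fin m → ℝ)}
    (hlamne : ∀ i, lam m w.1 w.2.1 w.2.2 i ≠ 0)
    (hlam0ne : 1 - ∑ i, lam m w.1 w.2.1 w.2.2 i ≠ 0) :
    ContinuousAt (fun w : ℝ × (Fin m → ℝ) × (Fin m → ℝ) => Bs1 m w.1 w.2.1 w.2.2) w := by
  have hsuml : Continuous (fun w : ℝ × (Fin m → ℝ) × (Fin m → ℝ) =>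
      ∑ i, lam m w.1 w.2.1 w.2.2 i) := continuous_finset_sum _ fun i _ => continuous_lamw i
  have hlog0 : ContinuousAt (fun w : ℝ × (Fin m → ℝ) × (Fin m → ℝ) =>
      Real.log (1 - ∑ i, lam m w.1 w.2.1 w.2.2 i)) w :=
    ((continuous_const.sub hsuml).continuousAt).log hlam0ne
  have hlogi : ∀ i : Fin m, ContinuousAt (fun w : ℝ × (Fin m → ℝ) × (Fin m → ℝ) =>
      Real.log (lam m w.1 w.2.1 w.2.2 i)) w := fun i =>
    ((continuous_lamw i).continuousAt).log (hlamne i)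
  have hsumd : Continuous (fun w : ℝ × (Fin m → ℝ) × (Fin m → ℝ) =>
      ∑ i, dd m w.2.1 w.2.2 i) := continuous_finset_sum _ fun i _ => continuous_ddw i
  simp only [Bs1]
  refine ContinuousAt.sub (ContinuousAt.add ?_ ?_) ?_
  · exact (hlog0.add continuousAt_const).mul (hsumd.neg.continuousAt)
  · exact tendsto_finset_sum _ fun i _ =>
      ((hlogi i).add continuousAt_const).mul (continuous_ddw i).continuousAt
  · exact tendsto_finset_sum _ fun i _ =>
      (((continuous_apply i).comp (continuous_fst.comp continuous_snd)).continuousAt).mul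
        (continuous_ddw i).continuousAt

lemma continuousAt_Brhow (q : Fin m) {w : ℝ × (Fin m → ℝ) × (Fin m → ℝ)}
    (hlamne : ∀ i, lam m w.1 w.2.1 w.2.2 i ≠ 0)
    (hlam0ne : 1 - ∑ i, lam m w.1 w.2.1 w.2.2 i ≠ 0) :
    ContinuousAt (fun w : ℝ × (Fin m → ℝ) × (Fin m → ℝ) => Brho m q w.1 w.2.1 w.2.2) w := by
  have hsuml : Continuous (fun w : ℝ × (Fin m → ℝ) × (Fin m → ℝ) =>
      ∑ i, lam m w.1 w.2.1 w.2.2 i) := continuous_finset_sum _ fun i _ => continuous_lamw i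
  have hlog0 : ContinuousAt (fun w : ℝ × (Fin m → ℝ) × (Fin m → ℝ) =>
      Real.log (1 - ∑ i, lam m w.1 w.2.1 w.2.2 i)) w :=
    ((continuous_const.sub hsuml).continuousAt).log hlam0ne
  have hlogi : ∀ i : Fin m, ContinuousAt (fun w : ℝ × (Fin m → ℝ) × (Fin m → ℝ) =>
      Real.log (lam m w.1 w.2.1 w.2.2 i)) w := fun i =>
    ((continuous_lamw i).continuousAt).log (hlamne i)
  have hmuP : ∀ i : Fin m, Continuous (fun w : ℝ × (Fin m → ℝ) × (Fin m → ℝ) =>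
      (1 - w.1) * muP m q w.2.1 i) := fun i =>
    (continuous_const.sub continuous_fst).mul (continuous_muPw q i)
  have hq : Continuous (fun w : ℝ × (Fin m → ℝ) × (Fin m → ℝ) => Real.exp (w.2.1 q)) :=
    Real.continuous_exp.comp ((continuous_apply q).comp (continuous_fst.comp continuous_snd))
  simp only [Brho]
  refine ContinuousAt.sub (ContinuousAt.add ?_ (ContinuousAt.add ?_ ?_)) ?_
  · exact ((hq.div continuous_Ew (fun w => (Epos _).ne')).continuousAt)
  · exact (hlog0.add continuousAt_const).mul
      ((continuous_finset_sum _ fun i _ => hmuP i).neg.continuousAt)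
  · exact tendsto_finset_sum _ fun i _ =>
      ((hlogi i).add continuousAt_const).mul (hmuP i).continuousAt
  · exact tendsto_finset_sum _ fun i _ =>
      ((continuous_const.mul (continuous_lamw i)).continuousAt).add
        ((((continuous_apply i).comp (continuous_fst.comp continuous_snd)).mul
          (hmuP i)).continuousAt)

lemma continuousOn_h (h : ℝ → (Fin m → ℝ) → (Fin m → ℝ) → ℝ)
    (hh : ∀ t ρ x, x ∈ frontier (simplex m) → 0 < t → t < bfun m x ρ →
      h t ρ x ∈ Set.Ioo (0 : ℝ) 1 ∧ Bfun m (h t ρ x) ρ x = t) :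
    ContinuousOn (fun w : ℝ × (Fin m → ℝ) × (Fin m → ℝ) => h w.1 w.2.1 w.2.2)
      {q : ℝ × (Fin m → ℝ) × (Fin m → ℝ) |
        q.2.2 ∈ frontier (simplex m) ∧ 0 < q.1 ∧ q.1 < bfun m q.2.2 q.2.1} := by
  intro w hw
  set S : Set (ℝ × (Fin m → ℝ) × (Fin m → ℝ)) :=
    {q : ℝ × (Fin m → ℝ) × (Fin m → ℝ) |
        q.2.2 ∈ frontier (simplex m) ∧ 0 < q.1 ∧ q.1 < bfun m q.2.2 q.2.1} with hS
  have hT : Filter.Tendsto (fun w' : ℝ × (Fin m → ℝ) × (Fin m → ℝ) => w'.1)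
      (nhdsWithin w S) (nhds w.1) := (continuous_fst.tendsto w).mono_left nhdsWithin_le_nhds
  have hP : Filter.Tendsto (fun w' : ℝ × (Fin m → ℝ) × (Fin m → ℝ) => w'.2.1)
      (nhdsWithin w S) (nhds w.2.1) :=
    ((continuous_fst.comp continuous_snd).tendsto w).mono_left nhdsWithin_le_nhds
  have hX : Filter.Tendsto (fun w' : ℝ × (Fin m → ℝ) × (Fin m → ℝ) => w'.2.2)
      (nhdsWithin w S) (nhds w.2.2) :=
    ((continuous_snd.comp continuous_snd).tendsto w).mono_left nhdsWithin_le_nhds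
  exact h_tendsto h hh hw.1 hw.2.1 hw.2.2 hT hP hX
    (eventually_mem_nhdsWithin.mono fun w' hw' => hw')

end HD


/-- h is differentiable in t and in each ρ_p on H, with
h_t = 1/B_s(h,ρ,x) > 0 and h_{ρ_p} = −B_{ρ_p}(h,ρ,x)/B_s(h,ρ,x), and these
partial derivatives are continuous on H. -/
theorem h_derivs (m : ℕ) (hm : 1 ≤ m)
    (h : ℝ → (Fin m → ℝ) → (Fin m → ℝ) → ℝ)
    (hh : ∀ t ρ x, x ∈ frontier (simplex m) → 0 < t → t < bfun m x ρ →
      h t ρ x ∈ Set.Ioo (0 : ℝ) 1 ∧ Bfun m (h t ρ x) ρ x = t) :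
    (∀ t ρ x, x ∈ frontier (simplex m) → 0 < t → t < bfun m x ρ →
      HasDerivAt (fun t' => h t' ρ x)
        (1 / deriv (fun s => Bfun m s ρ x) (h t ρ x)) t ∧
      0 < 1 / deriv (fun s => Bfun m s ρ x) (h t ρ x) ∧
      ∀ p : Fin m,
        HasDerivAt (fun r => h t (Function.update ρ p r) x)
          (-(pderivR m p (fun ρ' => Bfun m (h t ρ x) ρ' x) ρ)
            / deriv (fun s => Bfun m s ρ x) (h t ρ x)) (ρ p)) ∧
    ContinuousOn (fun w : ℝ × (Fin m → ℝ) × (Fin m → ℝ) =>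
      deriv (fun t' => h t' w.2.1 w.2.2) w.1) (Hset m) ∧
    ∀ p : Fin m,
      ContinuousOn (fun w : ℝ × (Fin m → ℝ) × (Fin m → ℝ) =>
        deriv (fun r => h w.1 (Function.update w.2.1 p r) w.2.2) (w.2.1 p)) (Hset m) := by
  have main1 : ∀ t ρ x, x ∈ frontier (simplex m) → 0 < t → t < bfun m x ρ →
      HasDerivAt (fun t' => h t' ρ x)
        (1 / deriv (fun s => Bfun m s ρ x) (h t ρ x)) t ∧
      0 < 1 / deriv (fun s => Bfun m s ρ x) (h t ρ x) ∧
      (deriv (fun s => Bfun m s ρ x) (h t ρ x) = HD.Bs1 m (h t ρ x) ρ x) ∧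
      ∀ p : Fin m,
        HasDerivAt (fun r => h t (Function.update ρ p r) x)
          (-(pderivR m p (fun ρ' => Bfun m (h t ρ x) ρ' x) ρ)
            / deriv (fun s => Bfun m s ρ x) (h t ρ x)) (ρ p) ∧
        pderivR m p (fun ρ' => Bfun m (h t ρ x) ρ' x) ρ = HD.Brho m p (h t ρ x) ρ x := by
    intro t ρ x hx ht htb
    obtain ⟨hsI, hBt⟩ := hh t ρ x hx ht htb
    have hxs := HD.mem_simplex_of_frontier hx
    have hne := HD.frontier_ne_mu hx ρ
    have hlamne : ∀ i, HD.lam m (h t ρ x) ρ x i ≠ 0 :=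
      fun i => (HD.lam_pos hxs hsI.1.le hsI.2 ρ i).ne'
    have hlam0ne : 1 - ∑ i, HD.lam m (h t ρ x) ρ x i ≠ 0 :=
      (HD.lam0_pos hxs hsI.1.le hsI.2 ρ).ne'
    have hBd : HasDerivAt (fun s => Bfun m s ρ x) (HD.Bs1 m (h t ρ x) ρ x) (h t ρ x) :=
      HD.hasDerivAt_Bfun_s ρ x hlamne hlam0ne
    have hBs1pos : 0 < HD.Bs1 m (h t ρ x) ρ x := HD.Bs1_pos hxs hne hsI.1 hsI.2
    have hderiveq : deriv (fun s => Bfun m s ρ x) (h t ρ x) = HD.Bs1 m (h t ρ x) ρ x :=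
      hBd.deriv
    have hgc : ContinuousAt (fun t' => h t' ρ x) t := by
      exact HD.h_tendsto h hh hx ht htb tendsto_id tendsto_const_nhds tendsto_const_nhds
        (by filter_upwards [Ioo_mem_nhds ht htb] with t' ht'; exact ⟨hx, ht'.1, ht'.2⟩)
    have hfg : ∀ᶠ t' in nhds t, Bfun m (h t' ρ x) ρ x = t' := by
      filter_upwards [Ioo_mem_nhds ht htb] with t' ht'
      exact (hh t' ρ x hx ht'.1 ht'.2).2
    have hDt : HasDerivAt (fun t' => h t' ρ x) (HD.Bs1 m (h t ρ x) ρ x)⁻¹ t :=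
      HasDerivAt.of_local_left_inverse hgc hBd hBs1pos.ne' hfg
    refine ⟨by rw [hderiveq, one_div]; exact hDt,
      by rw [hderiveq]; exact one_div_pos.mpr hBs1pos, hderiveq, ?_⟩
    intro p
    have hcd := HD.contDiffAt_F p ρ x (p₀ := ((ρ p : ℝ), h t ρ x))
      (by simpa [Function.update_eq_self] using hlamne)
      (by simpa [Function.update_eq_self] using hlam0ne)
    have hSF : HasStrictFDerivAt (fun pp : ℝ × ℝ => Bfun m pp.2 (Function.update ρ p pp.1) x)
        (fderiv ℝ (fun pp : ℝ × ℝ => Bfun m pp.2 (Function.update ρ p pp.1) x)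
          ((ρ p : ℝ), h t ρ x)) ((ρ p : ℝ), h t ρ x) :=
      hcd.hasStrictFDerivAt one_ne_zero
    set L := fderiv ℝ (fun pp : ℝ × ℝ => Bfun m pp.2 (Function.update ρ p pp.1) x)
      ((ρ p : ℝ), h t ρ x) with hLdef
    have hslice_s : HasDerivAt (fun s => Bfun m s ρ x) (L ((0:ℝ), (1:ℝ))) (h t ρ x) := by
      have h1 : HasDerivAt (fun s : ℝ => ((ρ p : ℝ), s)) (((0:ℝ), (1:ℝ))) (h t ρ x) :=
        (hasDerivAt_const _ _).prodMk (hasDerivAt_id _)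
      have h2 := hSF.hasFDerivAt.comp_hasDerivAt (h t ρ x) h1
      have h3 : HasDerivAt (fun s : ℝ => Bfun m s (Function.update ρ p (ρ p)) x)
          (L ((0:ℝ), (1:ℝ))) (h t ρ x) := h2
      rwa [Function.update_eq_self] at h3
    have hL01 : L ((0:ℝ), (1:ℝ)) = HD.Bs1 m (h t ρ x) ρ x := by
      rw [← hslice_s.deriv]; exact hderiveq
    have hslice_r : HasDerivAt (fun r => Bfun m (h t ρ x) (Function.update ρ p r) x)
        (L ((1:ℝ), (0:ℝ))) (ρ p) := by
      have h1 : HasDerivAt (fun r : ℝ => (r, h t ρ x)) (((1:ℝ), (0:ℝ))) (ρ p) :=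
        (hasDerivAt_id _).prodMk (hasDerivAt_const _ _)
      have h2 := hSF.hasFDerivAt.comp_hasDerivAt (ρ p) h1
      have h3 : HasDerivAt (fun r : ℝ => Bfun m (h t ρ x) (Function.update ρ p r) x)
          (L ((1:ℝ), (0:ℝ))) (ρ p) := h2
      exact h3
    have hpd : pderivR m p (fun ρ' => Bfun m (h t ρ x) ρ' x) ρ = L ((1:ℝ), (0:ℝ)) := by
      simp only [pderivR]; exact hslice_r.deriv
    have hpd2 : pderivR m p (fun ρ' => Bfun m (h t ρ x) ρ' x) ρ
        = HD.Brho m p (h t ρ x) ρ x := by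
      simp only [pderivR]; exact (HD.hasDerivAt_Bfun_rho p hlamne hlam0ne).deriv
    have hupdc : Filter.Tendsto (fun r => Function.update ρ p r) (nhds (ρ p)) (nhds ρ) := by
      have h0 := (HD.continuous_update ρ p).tendsto (ρ p)
      rwa [Function.update_eq_self] at h0
    have hbfc : Filter.Tendsto (fun r => bfun m x (Function.update ρ p r)) (nhds (ρ p))
        (nhds (bfun m x ρ)) := ((HD.continuous_bfun_rho x).tendsto ρ).comp hupdc
    have hev : ∀ᶠ r in nhds (ρ p),
        x ∈ frontier (simplex m) ∧ 0 < t ∧ t < bfun m x (Function.update ρ p r) := by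
      filter_upwards [tendsto_const_nhds.eventually_lt hbfc htb] with r hr
      exact ⟨hx, ht, hr⟩
    have hgc2 : ContinuousAt (fun r => h t (Function.update ρ p r) x) (ρ p) := by
      have h0 := HD.h_tendsto h hh hx ht htb (T := fun _ : ℝ => t) (l := nhds (ρ p))
        tendsto_const_nhds hupdc tendsto_const_nhds hev
      have h1 : (fun r => h t (Function.update ρ p r) x) (ρ p) = h t ρ x := by
        simp only [Function.update_eq_self]
      unfold ContinuousAt
      rw [h1]
      exact h0
    have hgz : h t (Function.update ρ p (ρ p)) x = h t ρ x := by
      rw [Function.update_eq_self]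
    have hfg2 : ∀ᶠ r in nhds (ρ p),
        (fun pp : ℝ × ℝ => Bfun m pp.2 (Function.update ρ p pp.1) x)
          (r, h t (Function.update ρ p r) x)
        = (fun pp : ℝ × ℝ => Bfun m pp.2 (Function.update ρ p pp.1) x)
          ((ρ p : ℝ), h t ρ x) := by
      filter_upwards [hev] with r hr
      have h0 := (hh t (Function.update ρ p r) x hr.1 hr.2.1 hr.2.2).2
      show Bfun m (h t (Function.update ρ p r) x) (Function.update ρ p r) x
        = Bfun m (h t ρ x) (Function.update ρ p (ρ p)) x
      rw [h0, Function.update_eq_self, hBt]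
    have hDr := HD.implicit_hasDerivAt
      (F := fun pp : ℝ × ℝ => Bfun m pp.2 (Function.update ρ p pp.1) x)
      (L := L) (z := ((ρ p : ℝ), h t ρ x)) hSF
      (by rw [hL01]; exact hBs1pos.ne')
      (g := fun r => h t (Function.update ρ p r) x) hgc2 hgz hfg2
    refine ⟨?_, hpd2⟩
    have heq : -(pderivR m p (fun ρ' => Bfun m (h t ρ x) ρ' x) ρ)
        / deriv (fun s => Bfun m s ρ x) (h t ρ x)
        = -(L ((1:ℝ), (0:ℝ))) / L ((0:ℝ), (1:ℝ)) := by
      rw [hpd, hderiveq, hL01]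
    rw [heq]
    exact hDr
  refine ⟨fun t ρ x hx ht htb => ?_, ?_, ?_⟩
  · obtain ⟨h1, h2, _, h4⟩ := main1 t ρ x hx ht htb
    exact ⟨h1, h2, fun p => (h4 p).1⟩
  · -- continuity of the t-partial derivative
    have hcont : ContinuousOn (fun w : ℝ × (Fin m → ℝ) × (Fin m → ℝ) =>
        1 / HD.Bs1 m (h w.1 w.2.1 w.2.2) w.2.1 w.2.2) (Hset m) := by
      intro w hw
      obtain ⟨hsI, hBt⟩ := hh w.1 w.2.1 w.2.2 hw.1 hw.2.1 hw.2.2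
      have hxs := HD.mem_simplex_of_frontier hw.1
      have h1 : ContinuousWithinAt (fun w : ℝ × (Fin m → ℝ) × (Fin m → ℝ) =>
          ((h w.1 w.2.1 w.2.2 : ℝ), w.2.1, w.2.2)) (Hset m) w :=
        (HD.continuousOn_h h hh w hw).prodMk
          (((continuous_fst.comp continuous_snd).prodMk
            (continuous_snd.comp continuous_snd)).continuousWithinAt)
      have h2 : ContinuousAt (fun w : ℝ × (Fin m → ℝ) × (Fin m → ℝ) =>
          HD.Bs1 m w.1 w.2.1 w.2.2) ((h w.1 w.2.1 w.2.2 : ℝ), w.2.1, w.2.2) :=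
        HD.continuousAt_Bs1w
          (fun i => (HD.lam_pos hxs hsI.1.le hsI.2 w.2.1 i).ne')
          (HD.lam0_pos hxs hsI.1.le hsI.2 w.2.1).ne'
      have h3 := h2.comp_continuousWithinAt
        (f := fun w : ℝ × (Fin m → ℝ) × (Fin m → ℝ) =>
          ((h w.1 w.2.1 w.2.2 : ℝ), w.2.1, w.2.2)) h1
      have h4 : ContinuousWithinAt (fun w : ℝ × (Fin m → ℝ) × (Fin m → ℝ) =>
          HD.Bs1 m (h w.1 w.2.1 w.2.2) w.2.1 w.2.2) (Hset m) w := h3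
      exact continuousWithinAt_const.div h4
        (HD.Bs1_pos hxs (HD.frontier_ne_mu hw.1 w.2.1) hsI.1 hsI.2).ne'
    apply ContinuousOn.congr hcont
    intro w hw
    obtain ⟨h1, _, h3, _⟩ := main1 w.1 w.2.1 w.2.2 hw.1 hw.2.1 hw.2.2
    show deriv (fun t' => h t' w.2.1 w.2.2) w.1
      = 1 / HD.Bs1 m (h w.1 w.2.1 w.2.2) w.2.1 w.2.2
    rw [h1.deriv, h3]
  · -- continuity of the ρ_p partial derivatives
    intro p
    have hcont : ContinuousOn (fun w : ℝ × (Fin m → ℝ) × (Fin m → ℝ) =>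
        -(HD.Brho m p (h w.1 w.2.1 w.2.2) w.2.1 w.2.2)
          / HD.Bs1 m (h w.1 w.2.1 w.2.2) w.2.1 w.2.2) (Hset m) := by
      intro w hw
      obtain ⟨hsI, hBt⟩ := hh w.1 w.2.1 w.2.2 hw.1 hw.2.1 hw.2.2
      have hxs := HD.mem_simplex_of_frontier hw.1
      have h1 : ContinuousWithinAt (fun w : ℝ × (Fin m → ℝ) × (Fin m → ℝ) =>
          ((h w.1 w.2.1 w.2.2 : ℝ), w.2.1, w.2.2)) (Hset m) w :=
        (HD.continuousOn_h h hh w hw).prodMk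
          (((continuous_fst.comp continuous_snd).prodMk
            (continuous_snd.comp continuous_snd)).continuousWithinAt)
      have h2 : ContinuousAt (fun w : ℝ × (Fin m → ℝ) × (Fin m → ℝ) =>
          HD.Bs1 m w.1 w.2.1 w.2.2) ((h w.1 w.2.1 w.2.2 : ℝ), w.2.1, w.2.2) :=
        HD.continuousAt_Bs1w
          (fun i => (HD.lam_pos hxs hsI.1.le hsI.2 w.2.1 i).ne')
          (HD.lam0_pos hxs hsI.1.le hsI.2 w.2.1).ne'
      have h2' : ContinuousAt (fun w : ℝ × (Fin m → ℝ) × (Fin m → ℝ) =>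
          HD.Brho m p w.1 w.2.1 w.2.2) ((h w.1 w.2.1 w.2.2 : ℝ), w.2.1, w.2.2) :=
        HD.continuousAt_Brhow p
          (fun i => (HD.lam_pos hxs hsI.1.le hsI.2 w.2.1 i).ne')
          (HD.lam0_pos hxs hsI.1.le hsI.2 w.2.1).ne'
      have h3a := h2.comp_continuousWithinAt
        (f := fun w : ℝ × (Fin m → ℝ) × (Fin m → ℝ) =>
          ((h w.1 w.2.1 w.2.2 : ℝ), w.2.1, w.2.2)) h1
      have h3 : ContinuousWithinAt (fun w : ℝ × (Fin m → ℝ) × (Fin m → ℝ) =>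
          HD.Bs1 m (h w.1 w.2.1 w.2.2) w.2.1 w.2.2) (Hset m) w := h3a
      have h3b := h2'.comp_continuousWithinAt
        (f := fun w : ℝ × (Fin m → ℝ) × (Fin m → ℝ) =>
          ((h w.1 w.2.1 w.2.2 : ℝ), w.2.1, w.2.2)) h1
      have h3' : ContinuousWithinAt (fun w : ℝ × (Fin m → ℝ) × (Fin m → ℝ) =>
          HD.Brho m p (h w.1 w.2.1 w.2.2) w.2.1 w.2.2) (Hset m) w := h3b
      exact h3'.neg.div h3
        (HD.Bs1_pos hxs (HD.frontier_ne_mu hw.1 w.2.1) hsI.1 hsI.2).ne'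
    apply ContinuousOn.congr hcont
    intro w hw
    obtain ⟨_, _, h3, h4⟩ := main1 w.1 w.2.1 w.2.2 hw.1 hw.2.1 hw.2.2
    obtain ⟨hd, hpe⟩ := h4 p
    show deriv (fun r => h w.1 (Function.update w.2.1 p r) w.2.2) (w.2.1 p)
      = -(HD.Brho m p (h w.1 w.2.1 w.2.2) w.2.1 w.2.2)
        / HD.Bs1 m (h w.1 w.2.1 w.2.2) w.2.1 w.2.2
    rw [hd.deriv, h3, hpe]
end
end
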